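/- arXiv:2212.09954 — 5 statements merged into one kernel-verified Lean document; each statement's English description precedes it below -/
import Mathlib

section
/- Let j ∈ {1,…,d}, let C be a compact set in ℝ^d with y^j = 1 for all y ∈ C, let h(x) = x^j + g₁(x^{−j}) − g₂(x^{−j}) where g₁, g₂ are convex functions on ℝ^{d−1} with linear growth, and let H := {x ∈ ℝ^d : h(x) = 0}. Then h ∈ H^j_C (i.e., ∇h(x) ∈ C whenever x^{−j} ∈ dom∇g₁ ∩ dom∇g₂) if and only if for every x ∈ H there exists a normal vector w ∈ C to H at x. -/
open Filter Topology Set Pointwise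
open scoped RealInnerProductSpace

noncomputable section

abbrev Euc (d : ℕ) := EuclideanSpace ℝ (Fin d)

/-- A proper lower-semicontinuous (closed) convex function with values in `ℝ ∪ {+∞}`. -/
def ClosedConvexFun {d : ℕ} (f : Euc d → EReal) : Prop :=
  LowerSemicontinuous f ∧ (∀ x, f x ≠ ⊥) ∧ (∃ x, f x ≠ ⊤) ∧
    ∀ x y : Euc d, ∀ a b : ℝ, 0 ≤ a → 0 ≤ b → a + b = 1 →
      f (a • x + b • y) ≤ (a : EReal) * f x + (b : EReal) * f y

/-- Subdifferential of an `EReal`-valued function. -/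
def subdiff {d : ℕ} (f : Euc d → EReal) (x : Euc d) : Set (Euc d) :=
  {y | ∀ z : Euc d, ((⟪z, y⟫ : ℝ) : EReal) + f x ≤ f (x + z)}

/-- Convex conjugate. -/
def fconj {d : ℕ} (f : Euc d → EReal) (y : Euc d) : EReal :=
  ⨆ x : Euc d, ((⟪x, y⟫ : ℝ) : EReal) - f x

/-- The function `f_A(x) = sup_{y ∈ A} (⟨x,y⟩ - f*(y))`. -/
def restrSup {d : ℕ} (f : Euc d → EReal) (A : Set (Euc d)) (x : Euc d) : EReal :=
  ⨆ y ∈ A, (((⟪x, y⟫ : ℝ) : EReal) - fconj f y)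

/-- `Arg_A(x) = argmax_{y ∈ A} (⟨x,y⟩ - f*(y))`. -/
def argMaxOn {d : ℕ} (f : Euc d → EReal) (A : Set (Euc d)) (x : Euc d) : Set (Euc d) :=
  {y ∈ A | ∀ z ∈ A, ((⟪x, z⟫ : ℝ) : EReal) - fconj f z ≤ ((⟪x, y⟫ : ℝ) : EReal) - fconj f y}

/-- Linear growth: `|g x| ≤ K (1 + |x|)`. -/
def LinGrowth {k : ℕ} (g : Euc k → ℝ) : Prop :=
  ∃ K > 0, ∀ x, |g x| ≤ K * (1 + ‖x‖)

/-- `x^{-j}`: delete the `j`-th coordinate. -/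
def dropCoord {d : ℕ} (j : Fin (d + 1)) (x : Euc (d + 1)) : Euc d :=
  WithLp.toLp 2 (fun i => x (j.succAbove i))

/-- The class `H^j_C`. -/
def MemH {d : ℕ} (j : Fin (d + 1)) (C : Set (Euc (d + 1))) (h : Euc (d + 1) → ℝ) : Prop :=
  ∃ g₁ g₂ : Euc d → ℝ, ConvexOn ℝ Set.univ g₁ ∧ ConvexOn ℝ Set.univ g₂ ∧
    LinGrowth g₁ ∧ LinGrowth g₂ ∧
    (∀ x : Euc (d + 1), h x = x j + g₁ (dropCoord j x) - g₂ (dropCoord j x)) ∧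
    ∀ x : Euc (d + 1), DifferentiableAt ℝ g₁ (dropCoord j x) →
      DifferentiableAt ℝ g₂ (dropCoord j x) → gradient h x ∈ C

/-- `θ^j(C) = {y / y^j : y ∈ C}`. -/
def theta {d : ℕ} (j : Fin d) (C : Set (Euc d)) : Set (Euc d) :=
  (fun y => (y j)⁻¹ • y) '' C

/-- `w` is a regular normal to `H` at `x`: `limsup_{H ∋ y → x} ⟨w, y-x⟩/|y-x| ≤ 0`. -/
def RegNormal {d : ℕ} (H : Set (Euc d)) (x w : Euc d) : Prop :=
  ∀ ε > 0, ∃ δ > 0, ∀ y ∈ H, y ≠ x → ‖y - x‖ < δ → ⟪w, y - x⟫ ≤ ε * ‖y - x‖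

/-- `w` is a normal vector to `H` at `x`. -/
def NormalVec {d : ℕ} (H : Set (Euc d)) (x w : Euc d) : Prop :=
  ∃ xs ws : ℕ → Euc d, (∀ n, xs n ∈ H ∧ RegNormal H (xs n) (ws n)) ∧
    Tendsto xs atTop (𝓝 x) ∧ Tendsto ws atTop (𝓝 w)

/-- Effective domain `{x | f x < ∞}`. -/
def effDom {d : ℕ} (f : Euc d → EReal) : Set (Euc d) := {x | f x ≠ ⊤}

/-- Real part of an `EReal`-valued function. -/
def toRealFun {d : ℕ} (f : Euc d → EReal) : Euc d → ℝ := fun x => (f x).toReal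

/-- Points of `int (dom f)` where `f` is differentiable. -/
def domGrad {d : ℕ} (f : Euc d → EReal) : Set (Euc d) :=
  {x | x ∈ interior (effDom f) ∧ DifferentiableAt ℝ (toRealFun f) x}

/-- `range ∇f`. -/
def gradRange {d : ℕ} (f : Euc d → EReal) : Set (Euc d) :=
  (fun x => gradient (toRealFun f) x) '' domGrad f

/-- Clarke-type subdifferential `∂̄f(x)`. -/
def clarke {d : ℕ} (f : Euc d → EReal) (x : Euc d) : Set (Euc d) :=
  closure (convexHull ℝ
    {v | ∃ xs : ℕ → Euc d, (∀ n, xs n ∈ domGrad f) ∧ Tendsto xs atTop (𝓝 x) ∧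
      Tendsto (fun n => gradient (toRealFun f) (xs n)) atTop (𝓝 v)})

/-- Singular set `Σ^j_A(Ψ)`. -/
def SigmaJ {d : ℕ} (Ψ : Euc d → Set (Euc d)) (j : Fin d) (A : Set (Euc d)) : Set (Euc d) :=
  {x | ∃ y₁ ∈ Ψ x ∩ A, ∃ y₂ ∈ Ψ x ∩ A, y₁ j ≠ y₂ j}

/-- The bilinear form `S(x,y) = ∑ x^i S^{ij} y^j`. -/
def Sbil {d : ℕ} (S : Matrix (Fin d) (Fin d) ℝ) (x y : Euc d) : ℝ :=
  ∑ i, ∑ k, x i * S i k * y k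

/-- Matrix acting on a vector. -/
def matVec {d : ℕ} (M : Matrix (Fin d) (Fin d) ℝ) (y : Euc d) : Euc d :=
  WithLp.toLp 2 (fun i => ∑ k, M i k * y k)

/-- Fitzpatrick function `ψ_G(x) = sup_{y ∈ G}(S(x,y) - S(y,y)/2)`. -/
def fitz {d : ℕ} (S : Matrix (Fin d) (Fin d) ℝ) (G : Set (Euc d)) (x : Euc d) : EReal :=
  ⨆ y ∈ G, ((Sbil S x y - Sbil S y y / 2 : ℝ) : EReal)

/-- `S`-monotone set. -/
def SMonotone {d : ℕ} (S : Matrix (Fin d) (Fin d) ℝ) (G : Set (Euc d)) : Prop :=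
  ∀ x ∈ G, ∀ y ∈ G, 0 ≤ Sbil S (x - y) (x - y)

/-- Projection `P_G(x) = argmin_{y ∈ G} S(x-y, x-y)`. -/
def proj {d : ℕ} (S : Matrix (Fin d) (Fin d) ℝ) (G : Set (Euc d)) (x : Euc d) : Set (Euc d) :=
  {y ∈ G | ∀ z ∈ G, Sbil S (x - y) (x - y) ≤ Sbil S (x - z) (x - z)}

/-- `S`-regular normal vector. -/
def SRegNormal {d : ℕ} (S : Matrix (Fin d) (Fin d) ℝ) (H : Set (Euc d)) (x w : Euc d) : Prop :=
  ∀ ε > 0, ∃ δ > 0, ∀ y ∈ H, y ≠ x → ‖y - x‖ < δ → Sbil S w (y - x) ≤ ε * ‖y - x‖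

/-- `S`-normal vector. -/
def SNormal {d : ℕ} (S : Matrix (Fin d) (Fin d) ℝ) (H : Set (Euc d)) (x w : Euc d) : Prop :=
  ∃ xs ws : ℕ → Euc d, (∀ n, xs n ∈ H ∧ SRegNormal S H (xs n) (ws n)) ∧
    Tendsto xs atTop (𝓝 x) ∧ Tendsto ws atTop (𝓝 w)

/-- First-order singular set `Σ₁^j(P_G)`. -/
def Sigma1J {d : ℕ} (S : Matrix (Fin d) (Fin d) ℝ) (G : Set (Euc d)) (j : Fin d) :
    Set (Euc d) :=
  {x | ∃ y₁ ∈ proj S G x, ∃ y₂ ∈ proj S G x,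
    0 < Sbil S (y₁ - y₂) (y₁ - y₂) ∧ y₁ j ≠ y₂ j}

/-- Zero-order singular set `Σ̄₀^j(P_G)`. -/
def Sigma0J {d : ℕ} (S : Matrix (Fin d) (Fin d) ℝ) (G : Set (Euc d)) (j : Fin d) :
    Set (Euc d) :=
  {x | ∃ y₁ ∈ proj S G x, ∃ y₂ ∈ proj S G x,
    Sbil S (y₁ - y₂) (y₁ - y₂) = 0 ∧ y₁ j ≠ y₂ j}

/-- The canonical bilinear form of index `m` on `ℝ^m × ℝ^k`. -/
def Lam {m k : ℕ} (p q : Euc m × Euc k) : ℝ := ⟪p.1, q.1⟫ - ⟪p.2, q.2⟫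

section AuxLemmas
open Metric MeasureTheory
section Part1
variable {d k : ℕ}

lemma Euc.inner_eq (x y : Euc k) : ⟪x, y⟫ = ∑ i, x i * y i := by
  simp [PiLp.inner_apply, RCLike.inner_apply, conj_trivial]
  exact Finset.sum_congr rfl fun _ _ => mul_comm _ _

def liftCoord (j : Fin (d + 1)) (a : ℝ) (u : Euc d) : Euc (d + 1) :=
  WithLp.toLp 2 (Fin.insertNth (α := fun _ => ℝ) j a u.ofLp)

@[simp] lemma dropCoord_liftCoord (j : Fin (d+1)) (a : ℝ) (u : Euc d) :
    dropCoord j (liftCoord j a u) = u := by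
  ext i
  simp [dropCoord, liftCoord]

@[simp] lemma liftCoord_apply_same (j : Fin (d+1)) (a : ℝ) (u : Euc d) :
    liftCoord j a u j = a := by simp [liftCoord]

lemma liftCoord_drop_self (j : Fin (d+1)) (x : Euc (d+1)) :
    liftCoord j (x j) (dropCoord j x) = x := by
  show WithLp.toLp 2 (Fin.insertNth (α := fun _ => ℝ) j (x j) (fun i => x (j.succAbove i))) = x
  rw [show (fun i => x.ofLp (j.succAbove i)) = Fin.removeNth j x.ofLp from rfl,
    Fin.insertNth_self_removeNth]

lemma dropCoord_sub (j : Fin (d+1)) (x y : Euc (d+1)) :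
    dropCoord j (x - y) = dropCoord j x - dropCoord j y := rfl

lemma liftCoord_sub (j : Fin (d+1)) (a b : ℝ) (u v : Euc d) :
    liftCoord j a u - liftCoord j b v = liftCoord j (a - b) (u - v) := by
  ext i
  rcases eq_or_ne i j with rfl | hij
  · show (liftCoord i a u - liftCoord i b v) i = _
    simp [liftCoord, Fin.insertNth_apply_same]
  · obtain ⟨i', rfl⟩ := Fin.exists_succAbove_eq hij
    simp only [liftCoord]
    show liftCoord j a u (j.succAbove i') - liftCoord j b v (j.succAbove i') = _
    simp [liftCoord, Fin.insertNth_apply_succAbove]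

lemma inner_split (j : Fin (d+1)) (x y : Euc (d+1)) :
    ⟪x, y⟫ = x j * y j + ⟪dropCoord j x, dropCoord j y⟫ := by
  rw [Euc.inner_eq, Euc.inner_eq, Fin.sum_univ_succAbove (fun i => x i * y i) j]
  rfl

lemma norm_sq_split (j : Fin (d+1)) (x : Euc (d+1)) :
    ‖x‖ ^ 2 = (x j) ^ 2 + ‖dropCoord j x‖ ^ 2 := by
  rw [← real_inner_self_eq_norm_sq, ← real_inner_self_eq_norm_sq, inner_split j]
  ring

lemma abs_coord_le (j : Fin (d+1)) (x : Euc (d+1)) : |x j| ≤ ‖x‖ := by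
  have h := norm_sq_split j x
  nlinarith [norm_nonneg x, norm_nonneg (dropCoord j x), abs_nonneg (x j), sq_abs (x j)]

lemma norm_dropCoord_le (j : Fin (d+1)) (x : Euc (d+1)) : ‖dropCoord j x‖ ≤ ‖x‖ := by
  have h := norm_sq_split j x
  nlinarith [norm_nonneg x, norm_nonneg (dropCoord j x)]

lemma norm_le_split (j : Fin (d+1)) (x : Euc (d+1)) : ‖x‖ ≤ |x j| + ‖dropCoord j x‖ := by
  have h := norm_sq_split j x
  nlinarith [norm_nonneg x, norm_nonneg (dropCoord j x), abs_nonneg (x j), sq_abs (x j)]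

end Part1
section Part2
variable {d k : ℕ}

lemma tendsto_norm_sub {X : Type*} [NormedAddCommGroup X] {x : ℕ → X} {a : X}
    (h : Tendsto x atTop (𝓝 a)) : Tendsto (fun n => ‖x n - a‖) atTop (𝓝 0) :=
  tendsto_iff_norm_sub_tendsto_zero.1 h

lemma tendsto_coord {x : ℕ → Euc (d+1)} {a : Euc (d+1)} (j : Fin (d+1))
    (h : Tendsto x atTop (𝓝 a)) : Tendsto (fun n => x n j) atTop (𝓝 (a j)) := by
  rw [tendsto_iff_norm_sub_tendsto_zero]
  refine squeeze_zero (fun n => norm_nonneg _) (fun n => ?_) (tendsto_norm_sub h)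
  have := abs_coord_le j (x n - a)
  simpa [Real.norm_eq_abs] using this

lemma tendsto_dropCoord {x : ℕ → Euc (d+1)} {a : Euc (d+1)} (j : Fin (d+1))
    (h : Tendsto x atTop (𝓝 a)) :
    Tendsto (fun n => dropCoord j (x n)) atTop (𝓝 (dropCoord j a)) := by
  rw [tendsto_iff_norm_sub_tendsto_zero]
  refine squeeze_zero (fun n => norm_nonneg _) (fun n => ?_) (tendsto_norm_sub h)
  rw [← dropCoord_sub]
  exact norm_dropCoord_le j _

lemma tendsto_liftCoord {a : ℕ → ℝ} {u : ℕ → Euc d} {a₀ : ℝ} {u₀ : Euc d} (j : Fin (d+1))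
    (ha : Tendsto a atTop (𝓝 a₀)) (hu : Tendsto u atTop (𝓝 u₀)) :
    Tendsto (fun n => liftCoord j (a n) (u n)) atTop (𝓝 (liftCoord j a₀ u₀)) := by
  rw [tendsto_iff_norm_sub_tendsto_zero]
  have hb : Tendsto (fun n => |a n - a₀| + ‖u n - u₀‖) atTop (𝓝 0) := by
    have := (tendsto_norm_sub ha).add (tendsto_norm_sub hu)
    simpa [Real.norm_eq_abs] using this
  refine squeeze_zero (fun n => norm_nonneg _) (fun n => ?_) hb
  rw [liftCoord_sub]
  have := norm_le_split j (liftCoord j (a n - a₀) (u n - u₀))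
  simpa using this

lemma lipschitzOnWith_ball {g : Euc k → ℝ} (hg : ConvexOn ℝ Set.univ g) (hK : LinGrowth g)
    (u₀ : Euc k) {r : ℝ} (hr : 0 < r) :
    ∃ L : NNReal, LipschitzOnWith L g (ball u₀ r) := by
  obtain ⟨K, hKpos, hKb⟩ := hK
  have hconv : ConvexOn ℝ (ball u₀ (2*r)) g := hg.subset (subset_univ _) (convex_ball _ _)
  have hM : ∀ a, dist a u₀ < 2*r → |g a| ≤ K * (1 + ‖u₀‖ + 2*r) := by
    intro a ha
    refine (hKb a).trans ?_
    have h1 : ‖a‖ ≤ ‖a - u₀‖ + ‖u₀‖ := by simpa using norm_add_le (a - u₀) u₀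
    have h2 : ‖a - u₀‖ < 2*r := by rwa [dist_eq_norm] at ha
    nlinarith
  have hL := hconv.lipschitzOnWith_of_abs_le hr hM
  exact ⟨_, hL.mono (ball_subset_ball (by linarith))⟩

lemma lip_est {g : Euc k → ℝ} {L : NNReal} {s : Set (Euc k)} (h : LipschitzOnWith L g s)
    {x y : Euc k} (hx : x ∈ s) (hy : y ∈ s) : |g x - g y| ≤ L * ‖x - y‖ := by
  have := h.dist_le_mul x hx y hy
  rwa [Real.dist_eq, dist_eq_norm] at this

lemma convex_continuous {g : Euc k → ℝ} (hg : ConvexOn ℝ Set.univ g) : Continuous g := by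
  rw [← continuousOn_univ]
  exact hg.continuousOn isOpen_univ

end Part2
section Part3
variable {k : ℕ} {g : Euc k → ℝ} {G u : Euc k}

lemma dir_slope (hd : HasGradientAt g G u) (w : Euc k) :
    Tendsto (fun t : ℝ => (g (u + t • w) - g u) / t) (𝓝[>] (0:ℝ)) (𝓝 ⟪G, w⟫) := by
  have hc : HasDerivAt (fun t : ℝ => u + t • w) w 0 := by
    simpa using ((hasDerivAt_id (0:ℝ)).smul_const w).const_add u
  have hglob : HasFDerivAt g (InnerProductSpace.toDual ℝ (Euc k) G) (u + (0:ℝ) • w) := by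
    simpa using hd.hasFDerivAt
  have hcomp : HasDerivAt (fun t : ℝ => g (u + t • w)) (⟪G, w⟫) 0 :=  by
    have := hglob.comp_hasDerivAt 0 hc
    simpa [Function.comp_def] using this
  have := hasDerivAt_iff_tendsto_slope_zero.1 hcomp
  have h2 : Tendsto (fun t : ℝ => t⁻¹ • (g (u + (0 + t) • w) - g (u + (0:ℝ) • w)))
      (𝓝[>] (0:ℝ)) (𝓝 ⟪G, w⟫) := this.mono_left (nhdsWithin_mono _ (fun t ht => ne_of_gt ht))
  refine h2.congr (fun t => ?_)
  simp [smul_eq_mul, div_eq_inv_mul]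

lemma convex_subgrad_at_diff (hg : ConvexOn ℝ Set.univ g) (hd : HasGradientAt g G u)
    (v : Euc k) : g u + ⟪G, v - u⟫ ≤ g v := by
  have hs := dir_slope hd (v - u)
  have hub : ∀ᶠ t in 𝓝[>] (0:ℝ), (g (u + t • (v - u)) - g u) / t ≤ g v - g u := by
    filter_upwards [Ioc_mem_nhdsGT_of_mem (Set.left_mem_Ico.2 one_pos)] with t ht
    have hconv := hg.2 (Set.mem_univ u) (Set.mem_univ v)
      (show (0:ℝ) ≤ 1 - t by linarith [ht.2]) (le_of_lt ht.1) (by ring)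
    have heq : u + t • (v - u) = (1 - t) • u + t • v := by
      rw [smul_sub, sub_smul, one_smul]; abel
    rw [heq, div_le_iff₀ ht.1]
    have : (1 - t) • g u + t • g v = (1 - t) * g u + t * g v := rfl
    rw [this] at hconv
    nlinarith
  have := le_of_tendsto hs hub
  linarith

lemma subgrad_unique (hd : HasGradientAt g G u) {s : Euc k}
    (hs : ∀ v, g u + ⟪s, v - u⟫ ≤ g v) : s = G := by
  have key : ∀ w : Euc k, ⟪s, w⟫ ≤ ⟪G, w⟫ := by
    intro w
    have hlb : ∀ᶠ t in 𝓝[>] (0:ℝ), ⟪s, w⟫ ≤ (g (u + t • w) - g u) / t := by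
      filter_upwards [self_mem_nhdsWithin] with t ht
      have h1 := hs (u + t • w)
      rw [add_sub_cancel_left, real_inner_smul_right] at h1
      rw [le_div_iff₀ ht]
      linarith
    exact ge_of_tendsto (dir_slope hd w) hlb
  have h2 := key (s - G)
  have h3 : ⟪s - G, s - G⟫ ≤ 0 := by
    rw [inner_sub_left]
    linarith
  have h4 : s - G = 0 := real_inner_self_nonpos.1 h3
  exact sub_eq_zero.1 h4

lemma subgrad_norm_le {L : NNReal} {u₀ : Euc k} {r : ℝ}
    (hLip : LipschitzOnWith L g (Metric.ball u₀ r))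
    {s : Euc k} (hu : u ∈ Metric.ball u₀ r) (hs : ∀ v, g u + ⟪s, v - u⟫ ≤ g v) :
    ‖s‖ ≤ L := by
  rcases eq_or_ne s 0 with rfl | hs0
  · simpa using L.coe_nonneg
  have hsn : 0 < ‖s‖ := norm_pos_iff.2 hs0
  have hdu : dist u u₀ < r := Metric.mem_ball.1 hu
  set t := (r - dist u u₀) / (2 * ‖s‖) with htdef
  have ht0 : 0 < t := div_pos (by linarith) (by positivity)
  have hnorm : ‖t • s‖ = t * ‖s‖ := by
    rw [norm_smul, Real.norm_eq_abs, abs_of_pos ht0]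
  have hv : u + t • s ∈ Metric.ball u₀ r := by
    have h1 : dist (u + t • s) u₀ ≤ dist (u + t • s) u + dist u u₀ := dist_triangle _ _ _
    have h2 : dist (u + t • s) u = t * ‖s‖ := by
      rw [dist_eq_norm, add_sub_cancel_left, hnorm]
    have h3 : t * ‖s‖ = (r - dist u u₀) / 2 := by
      rw [htdef]; field_simp
    rw [Metric.mem_ball]
    rw [h2, h3] at h1
    linarith
  have h1 := hs (u + t • s)
  rw [add_sub_cancel_left, real_inner_smul_right, real_inner_self_eq_norm_sq] at h1
  have h2 := lip_est hLip hv hu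
  rw [add_sub_cancel_left, hnorm] at h2
  have h4 : (t * ‖s‖) * ‖s‖ ≤ (t * ‖s‖) * (L : ℝ) := by
    have := (abs_le.1 h2).2
    nlinarith
  exact le_of_mul_le_mul_left h4 (mul_pos ht0 hsn)

lemma subgrad_of_fsub (hg : ConvexOn ℝ Set.univ g) {s : Euc k}
    (h : ∀ ε > 0, ∃ δ > 0, ∀ v, ‖v - u‖ < δ → g u + ⟪s, v - u⟫ - ε * ‖v - u‖ ≤ g v) :
    ∀ v, g u + ⟪s, v - u⟫ ≤ g v := by
  intro v
  rcases eq_or_ne v u with rfl | hvu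
  · simp
  have hnorm : 0 < ‖v - u‖ := norm_pos_iff.2 (sub_ne_zero.2 hvu)
  have key : ∀ ε > 0, g u + ⟪s, v - u⟫ ≤ g v + ε * ‖v - u‖ := by
    intro ε hε
    obtain ⟨δ, hδ, hF⟩ := h ε hε
    set t := min (1:ℝ) (δ / (2 * ‖v - u‖)) with htdef
    have ht0 : 0 < t := lt_min one_pos (by positivity)
    have ht1 : t ≤ 1 := min_le_left _ _
    have hvt : ‖(u + t • (v - u)) - u‖ < δ := by
      rw [add_sub_cancel_left, norm_smul, Real.norm_eq_abs, abs_of_pos ht0]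
      have h2 : t ≤ δ / (2 * ‖v - u‖) := min_le_right _ _
      have h3 : t * ‖v - u‖ ≤ δ / 2 := by
        calc t * ‖v - u‖ ≤ δ / (2 * ‖v - u‖) * ‖v - u‖ := by
              exact mul_le_mul_of_nonneg_right (min_le_right _ _) (norm_nonneg _)
          _ = δ / 2 := by field_simp
      linarith
    have h1 := hF _ hvt
    rw [add_sub_cancel_left, real_inner_smul_right, norm_smul, Real.norm_eq_abs,
      abs_of_pos ht0] at h1
    have hconv := hg.2 (Set.mem_univ u) (Set.mem_univ v)
      (show (0:ℝ) ≤ 1 - t by linarith) (le_of_lt ht0) (by ring)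
    have heq : u + t • (v - u) = (1 - t) • u + t • v := by
      rw [smul_sub, sub_smul, one_smul]; abel
    rw [heq] at h1
    have hc2 : (1 - t) • g u + t • g v = (1 - t) * g u + t * g v := rfl
    rw [hc2] at hconv
    have h5 : t * (g u + ⟪s, v - u⟫) ≤ t * (g v + ε * ‖v - u‖) := by nlinarith
    exact le_of_mul_le_mul_left h5 ht0
  refine le_of_forall_pos_le_add (fun ε hε => ?_)
  have := key (ε / ‖v - u‖) (by positivity)
  calc g u + ⟪s, v - u⟫ ≤ g v + ε / ‖v - u‖ * ‖v - u‖ := this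
    _ = g v + ε := by field_simp

end Part3
section Part4
open MeasureTheory
variable {k : ℕ}

lemma dense_diff_pts {g₁ g₂ : Euc k → ℝ} (h₁ : ConvexOn ℝ Set.univ g₁)
    (h₂ : ConvexOn ℝ Set.univ g₂) (hl₁ : LinGrowth g₁) (hl₂ : LinGrowth g₂)
    (u₀ : Euc k) {ε : ℝ} (hε : 0 < ε) :
    ∃ u, dist u u₀ < ε ∧ DifferentiableAt ℝ g₁ u ∧ DifferentiableAt ℝ g₂ u := by
  obtain ⟨L₁, hL₁⟩ := lipschitzOnWith_ball h₁ hl₁ u₀ hε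
  obtain ⟨L₂, hL₂⟩ := lipschitzOnWith_ball h₂ hl₂ u₀ hε
  by_contra hcon
  push_neg at hcon
  have a1 := hL₁.ae_differentiableWithinAt_of_mem (μ := volume)
  have a2 := hL₂.ae_differentiableWithinAt_of_mem (μ := volume)
  have hae : ∀ᵐ u ∂(volume : MeasureTheory.Measure (Euc k)), u ∉ Metric.ball u₀ ε := by
    filter_upwards [a1, a2] with u hu1 hu2
    intro hmem
    have d1 : DifferentiableAt ℝ g₁ u := (hu1 hmem).differentiableAt (isOpen_ball.mem_nhds hmem)
    have d2 : DifferentiableAt ℝ g₂ u := (hu2 hmem).differentiableAt (isOpen_ball.mem_nhds hmem)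
    exact hcon u (Metric.mem_ball.1 hmem) d1 d2
  have hpos := Metric.measure_ball_pos (volume : MeasureTheory.Measure (Euc k)) u₀ hε
  have hzero : (volume : MeasureTheory.Measure (Euc k)) (Metric.ball u₀ ε) = 0 := by
    rw [MeasureTheory.ae_iff] at hae
    simp at hae
    exact hae
  exact absurd hzero (ne_of_gt hpos)

lemma exists_subgrad {g : Euc k → ℝ} (hg : ConvexOn ℝ Set.univ g) (hl : LinGrowth g)
    (u : Euc k) : ∃ s, ∀ v, g u + ⟪s, v - u⟫ ≤ g v := by
  obtain ⟨L, hL⟩ := lipschitzOnWith_ball hg hl u (by norm_num : (0:ℝ) < 2)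
  have hsel : ∀ n : ℕ, ∃ w, dist w u < 1/(n+1) ∧ DifferentiableAt ℝ g w ∧
      DifferentiableAt ℝ g w := fun n => dense_diff_pts hg hg hl hl u (by positivity)
  choose w hwd hwdiff _hw2 using hsel
  have hwu : Tendsto w atTop (𝓝 u) := by
    rw [tendsto_iff_dist_tendsto_zero]
    exact squeeze_zero (fun n => dist_nonneg) (fun n => (hwd n).le)
      tendsto_one_div_add_atTop_nhds_zero_nat
  set s := fun n => gradient g (w n) with hsdef
  have hsub : ∀ n, ∀ v, g (w n) + ⟪s n, v - w n⟫ ≤ g v := fun n v =>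
    convex_subgrad_at_diff hg ((hwdiff n).hasGradientAt) v
  have hmem : ∀ n, w n ∈ Metric.ball u 2 := by
    intro n
    have h1 := hwd n
    have h2 : 1/((n:ℝ)+1) ≤ 1 := by
      rw [div_le_one (by positivity)]
      linarith [Nat.cast_nonneg (α := ℝ) n]
    rw [Metric.mem_ball]
    linarith
  have hbd : ∀ n, s n ∈ Metric.closedBall (0 : Euc k) L := by
    intro n
    simpa [Metric.mem_closedBall, dist_zero_right] using subgrad_norm_le hL (hmem n) (hsub n)
  obtain ⟨a, _ha, φ, hφ, hconv⟩ := (isCompact_closedBall (0:Euc k) L).tendsto_subseq hbd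
  refine ⟨a, fun v => ?_⟩
  have hu' : Tendsto (fun n => w (φ n)) atTop (𝓝 u) := hwu.comp hφ.tendsto_atTop
  have hlim : Tendsto (fun n => g (w (φ n)) + ⟪s (φ n), v - w (φ n)⟫) atTop
      (𝓝 (g u + ⟪a, v - u⟫)) :=
    ((convex_continuous hg).continuousAt.tendsto.comp hu').add
      (hconv.inner (tendsto_const_nhds.sub hu'))
  exact le_of_tendsto hlim (Eventually.of_forall (fun n => hsub (φ n) v))

lemma tendsto_subgrad {g : Euc k → ℝ} (hg : ConvexOn ℝ Set.univ g) (hl : LinGrowth g)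
    {G u₀ : Euc k} (hd : HasGradientAt g G u₀) {u s : ℕ → Euc k}
    (hu : Tendsto u atTop (𝓝 u₀))
    (hs : ∀ᶠ n in atTop, ∀ v, g (u n) + ⟪s n, v - u n⟫ ≤ g v) :
    Tendsto s atTop (𝓝 G) := by
  obtain ⟨L, hL⟩ := lipschitzOnWith_ball hg hl u₀ (by norm_num : (0:ℝ) < 1)
  apply tendsto_of_subseq_tendsto
  intro ns hns
  have hball : ∀ᶠ n in atTop, u n ∈ Metric.ball u₀ 1 := hu (Metric.ball_mem_nhds u₀ one_pos)
  have hfreq : ∃ᶠ n in atTop, s (ns n) ∈ Metric.closedBall (0:Euc k) L := by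
    have hev : ∀ᶠ n in atTop, s (ns n) ∈ Metric.closedBall (0:Euc k) L := by
      filter_upwards [hns.eventually hball, hns.eventually hs] with n h1 h2
      simpa [Metric.mem_closedBall, dist_zero_right] using subgrad_norm_le hL h1 h2
    exact hev.frequently
  obtain ⟨a, _ha, φ, hφ, hconv⟩ := (isCompact_closedBall (0:Euc k) L).tendsto_subseq' hfreq
  have hu' : Tendsto (fun n => u (ns (φ n))) atTop (𝓝 u₀) := hu.comp (hns.comp hφ.tendsto_atTop)
  have hsub : ∀ v, g u₀ + ⟪a, v - u₀⟫ ≤ g v := by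
    intro v
    have hev : ∀ᶠ n in atTop, g (u (ns (φ n))) + ⟪s (ns (φ n)), v - u (ns (φ n))⟫ ≤ g v :=
      (((hns.comp hφ.tendsto_atTop).eventually hs).mono (fun n h => h v))
    have hlim : Tendsto (fun n => g (u (ns (φ n))) + ⟪s (ns (φ n)), v - u (ns (φ n))⟫) atTop
        (𝓝 (g u₀ + ⟪a, v - u₀⟫)) :=
      ((convex_continuous hg).continuousAt.tendsto.comp hu').add
        (hconv.inner (tendsto_const_nhds.sub hu'))
    exact le_of_tendsto hlim hev
  have haG : a = G := subgrad_unique hd hsub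
  exact ⟨φ, haG ▸ hconv⟩

end Part4
section Part5
variable {d m : ℕ}

def dropCLM (j : Fin (d+1)) : Euc (d+1) →L[ℝ] Euc d :=
  LinearMap.toContinuousLinearMap
    { toFun := dropCoord j
      map_add' := fun _ _ => rfl
      map_smul' := fun _ _ => rfl }

@[simp] lemma dropCLM_apply (j : Fin (d+1)) (x : Euc (d+1)) : dropCLM j x = dropCoord j x := rfl

lemma hasGradientAt_h (j : Fin (d+1)) (g₁ g₂ : Euc d → ℝ) (h : Euc (d+1) → ℝ)
    (hh : ∀ x, h x = x j + g₁ (dropCoord j x) - g₂ (dropCoord j x))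
    {G₁ G₂ : Euc d} {x : Euc (d+1)}
    (hd₁ : HasGradientAt g₁ G₁ (dropCoord j x)) (hd₂ : HasGradientAt g₂ G₂ (dropCoord j x)) :
    HasGradientAt h (liftCoord j 1 (G₁ - G₂)) x := by
  rw [hasGradientAt_iff_hasFDerivAt]
  have hF : HasFDerivAt (fun y : Euc (d+1) => y j + g₁ (dropCoord j y) - g₂ (dropCoord j y))
      (((EuclideanSpace.proj j : Euc (d+1) →L[ℝ] ℝ)
        + ((InnerProductSpace.toDual ℝ (Euc d) G₁).comp (dropCLM j)))
        - ((InnerProductSpace.toDual ℝ (Euc d) G₂).comp (dropCLM j))) x := by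
    have h1 : HasFDerivAt (fun y : Euc (d+1) => y j)
        (EuclideanSpace.proj j : Euc (d+1) →L[ℝ] ℝ) x :=
      (EuclideanSpace.proj j : Euc (d+1) →L[ℝ] ℝ).hasFDerivAt
    have h2 : HasFDerivAt (fun y : Euc (d+1) => g₁ (dropCoord j y))
        ((InnerProductSpace.toDual ℝ (Euc d) G₁).comp (dropCLM j)) x :=
      (hd₁.hasFDerivAt).comp x ((dropCLM j).hasFDerivAt)
    have h3 : HasFDerivAt (fun y : Euc (d+1) => g₂ (dropCoord j y))
        ((InnerProductSpace.toDual ℝ (Euc d) G₂).comp (dropCLM j)) x :=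
      (hd₂.hasFDerivAt).comp x ((dropCLM j).hasFDerivAt)
    exact (h1.add h2).sub h3
  have hEq : (InnerProductSpace.toDual ℝ (Euc (d+1))) (liftCoord j 1 (G₁ - G₂))
      = (((EuclideanSpace.proj j : Euc (d+1) →L[ℝ] ℝ)
        + ((InnerProductSpace.toDual ℝ (Euc d) G₁).comp (dropCLM j)))
        - ((InnerProductSpace.toDual ℝ (Euc d) G₂).comp (dropCLM j))) := by
    apply ContinuousLinearMap.ext
    intro v
    simp only [InnerProductSpace.toDual_apply_apply, ContinuousLinearMap.sub_apply,
      ContinuousLinearMap.add_apply, ContinuousLinearMap.comp_apply, dropCLM_apply,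
      PiLp.proj_apply]
    rw [inner_split j (liftCoord j 1 (G₁ - G₂)) v]
    simp [inner_sub_left]
    ring
  rw [hEq]
  have hfun : h = fun y : Euc (d+1) => y j + g₁ (dropCoord j y) - g₂ (dropCoord j y) :=
    funext hh
  rw [hfun]
  exact hF

lemma regNormal_of_grad {h : Euc m → ℝ} {H : Set (Euc m)} (hH : H = {y | h y = 0})
    {x w : Euc m} (hx : x ∈ H) (hd : HasGradientAt h w x) : RegNormal H x w := by
  intro ε hε
  have hlo := (hasFDerivAt_iff_isLittleO_nhds_zero.mp hd.hasFDerivAt)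
  have hlo2 : (fun y => h y - h x - ⟪w, y - x⟫) =o[𝓝 x] fun y => y - x := by
    have := hd.hasFDerivAt.isLittleO
    simpa [InnerProductSpace.toDual_apply_apply] using this
  have hev := hlo2.def hε
  rw [Metric.eventually_nhds_iff] at hev
  obtain ⟨δ, hδ, hball⟩ := hev
  refine ⟨δ, hδ, fun y hy hyx hlt => ?_⟩
  have hx0 : h x = 0 := by rw [hH] at hx; exact hx
  have hy0 : h y = 0 := by rw [hH] at hy; exact hy
  have := hball (show dist y x < δ by rwa [dist_eq_norm])
  rw [hx0, hy0] at this
  simp only [Real.norm_eq_abs] at this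
  have h2 : |⟪w, y - x⟫| ≤ ε * ‖y - x‖ := by
    have : |(0:ℝ) - 0 - ⟪w, y - x⟫| ≤ ε * ‖y - x‖ := this
    simpa using this
  linarith [(abs_le.1 h2).2]

end Part5
end AuxLemmas
set_option maxHeartbeats 2000000 in
/-- Lemma 1 of the paper. -/
theorem stmt1 {d : ℕ} (j : Fin (d + 1)) (C : Set (Euc (d + 1)))
    (hC : IsCompact C) (hC1 : ∀ y ∈ C, y j = 1)
    (g₁ g₂ : Euc d → ℝ)
    (hg₁ : ConvexOn ℝ Set.univ g₁) (hg₂ : ConvexOn ℝ Set.univ g₂)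
    (hl₁ : LinGrowth g₁) (hl₂ : LinGrowth g₂)
    (h : Euc (d + 1) → ℝ)
    (hh : ∀ x, h x = x j + g₁ (dropCoord j x) - g₂ (dropCoord j x))
    (H : Set (Euc (d + 1))) (hH : H = {x | h x = 0}) :
    (∀ x : Euc (d + 1), DifferentiableAt ℝ g₁ (dropCoord j x) →
        DifferentiableAt ℝ g₂ (dropCoord j x) → gradient h x ∈ C) ↔
      ∀ x ∈ H, ∃ w ∈ C, NormalVec H x w := by
  constructor
  · -- forward direction
    intro A x hx
    have hsel : ∀ n : ℕ, ∃ u, dist u (dropCoord j x) < 1/(n+1) ∧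
        DifferentiableAt ℝ g₁ u ∧ DifferentiableAt ℝ g₂ u :=
      fun n => dense_diff_pts hg₁ hg₂ hl₁ hl₂ (dropCoord j x) (by positivity)
    choose w hwd hw1 hw2 using hsel
    have hwu : Tendsto w atTop (𝓝 (dropCoord j x)) := by
      rw [tendsto_iff_dist_tendsto_zero]
      exact squeeze_zero (fun n => dist_nonneg) (fun n => (hwd n).le)
        tendsto_one_div_add_atTop_nhds_zero_nat
    set xs := fun n => liftCoord j (g₂ (w n) - g₁ (w n)) (w n) with hxs
    have hdropxs : ∀ n, dropCoord j (xs n) = w n := fun n => dropCoord_liftCoord _ _ _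
    have hxsH : ∀ n, xs n ∈ H := by
      intro n
      rw [hH]
      show h (xs n) = 0
      rw [hh, hdropxs n]
      have : xs n j = g₂ (w n) - g₁ (w n) := liftCoord_apply_same _ _ _
      rw [this]; ring
    set ws := fun n => liftCoord j 1 (gradient g₁ (w n) - gradient g₂ (w n)) with hws
    have hgradn : ∀ n, HasGradientAt h (ws n) (xs n) := by
      intro n
      have e := hdropxs n
      have d1 : HasGradientAt g₁ (gradient g₁ (w n)) (dropCoord j (xs n)) := by
        rw [e]; exact (hw1 n).hasGradientAt
      have d2 : HasGradientAt g₂ (gradient g₂ (w n)) (dropCoord j (xs n)) := by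
        rw [e]; exact (hw2 n).hasGradientAt
      exact hasGradientAt_h j g₁ g₂ h hh d1 d2
    have hreg : ∀ n, RegNormal H (xs n) (ws n) := fun n =>
      regNormal_of_grad hH (hxsH n) (hgradn n)
    have hwsC : ∀ n, ws n ∈ C := by
      intro n
      have := A (xs n) (by rw [hdropxs n]; exact hw1 n) (by rw [hdropxs n]; exact hw2 n)
      rwa [(hgradn n).gradient] at this
    have hxj : x j = g₂ (dropCoord j x) - g₁ (dropCoord j x) := by
      have hx0 : h x = 0 := by rw [hH] at hx; exact hx
      rw [hh] at hx0; linarith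
    have hxs_lim : Tendsto xs atTop (𝓝 x) := by
      have h1 : Tendsto (fun n => g₂ (w n) - g₁ (w n)) atTop
          (𝓝 (g₂ (dropCoord j x) - g₁ (dropCoord j x))) :=
        ((convex_continuous hg₂).continuousAt.tendsto.comp hwu).sub
          ((convex_continuous hg₁).continuousAt.tendsto.comp hwu)
      have h2 := tendsto_liftCoord j h1 hwu
      rw [← hxj, liftCoord_drop_self j x] at h2
      exact h2
    obtain ⟨wlim, hwlimC, φ, hφ, hconv⟩ := hC.tendsto_subseq hwsC
    exact ⟨wlim, hwlimC, fun n => xs (φ n), fun n => ws (φ n),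
      fun n => ⟨hxsH _, hreg _⟩, hxs_lim.comp hφ.tendsto_atTop, hconv⟩
  · -- reverse direction
    intro B x hd₁ hd₂
    have hgradx : HasGradientAt h
        (liftCoord j 1 (gradient g₁ (dropCoord j x) - gradient g₂ (dropCoord j x))) x :=
      hasGradientAt_h j g₁ g₂ h hh hd₁.hasGradientAt hd₂.hasGradientAt
    rw [hgradx.gradient]
    set u := dropCoord j x with hu
    set G₁ := gradient g₁ u with hG₁
    set G₂ := gradient g₂ u with hG₂
    set xh := liftCoord j (g₂ u - g₁ u) u with hxh
    have hdropxh : dropCoord j xh = u := dropCoord_liftCoord _ _ _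
    have hxhH : xh ∈ H := by
      rw [hH]
      show h xh = 0
      rw [hh, hdropxh]
      have hj : xh j = g₂ u - g₁ u := liftCoord_apply_same _ _ _
      rw [hj]; ring
    obtain ⟨w, hwC, xs, ws, hprop, hxs, hws⟩ := B xh hxhH
    suffices hws' : Tendsto ws atTop (𝓝 (liftCoord j 1 (G₁ - G₂))) by
      rw [tendsto_nhds_unique hws' hws]
      exact hwC
    set un := fun n => dropCoord j (xs n) with hun
    have hunlim : Tendsto un atTop (𝓝 u) := by
      have := tendsto_dropCoord j hxs
      rwa [hdropxh] at this
    set tn := fun n => ws n j with htn_def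
    have htn : Tendsto tn atTop (𝓝 1) := by
      have := tendsto_coord j hws
      rwa [hC1 w hwC] at this
    set qn := fun n => dropCoord j (ws n) with hqn_def
    choose sn hsn using fun n => exists_subgrad hg₂ hl₂ (un n)
    have hsnG : Tendsto sn atTop (𝓝 G₂) :=
      tendsto_subgrad hg₂ hl₂ hd₂.hasGradientAt hunlim (Eventually.of_forall hsn)
    obtain ⟨L₁, hL₁⟩ := lipschitzOnWith_ball hg₁ hl₁ u one_pos
    obtain ⟨L₂, hL₂⟩ := lipschitzOnWith_ball hg₂ hl₂ u one_pos
    have hc : (0:ℝ) < 1 + L₁ + L₂ := by positivity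
    have hev1 : ∀ᶠ n in atTop, 0 < tn n := htn (lt_mem_nhds one_pos)
    have hev2 : ∀ᶠ n in atTop, dist (un n) u < 1/2 := by
      have := hunlim (Metric.ball_mem_nhds u (by norm_num : (0:ℝ) < 1/2))
      simpa [Metric.mem_ball] using this
    have hkey : ∀ᶠ n in atTop, ∀ v, g₁ (un n) + ⟪sn n + (tn n)⁻¹ • qn n, v - un n⟫ ≤ g₁ v := by
      filter_upwards [hev1, hev2] with n htpos hball
      apply subgrad_of_fsub hg₁
      intro ε hε
      obtain ⟨δ', hδ', hRN⟩ := (hprop n).2 (ε * tn n / (1 + L₁ + L₂)) (by positivity)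
      refine ⟨min (δ'/(1 + L₁ + L₂)) (1/2 - dist (un n) u),
        lt_min (by positivity) (by linarith), fun v hv => ?_⟩
      rcases eq_or_ne v (un n) with rfl | hvne
      · simp
      have hxsn : xs n = liftCoord j (g₂ (un n) - g₁ (un n)) (un n) := by
        have hmem := (hprop n).1
        rw [hH] at hmem
        have h0 : h (xs n) = 0 := hmem
        rw [hh] at h0
        have hj : xs n j = g₂ (un n) - g₁ (un n) := by
          have : dropCoord j (xs n) = un n := rfl
          rw [this] at h0
          linarith
        conv_lhs => rw [← liftCoord_drop_self j (xs n)]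
        rw [hj]
      set y := liftCoord j (g₂ v - g₁ v) v with hy
      have hdy : dropCoord j y = v := dropCoord_liftCoord _ _ _
      have hyH : y ∈ H := by
        rw [hH]
        show h y = 0
        rw [hh, hdy]
        have hj : y j = g₂ v - g₁ v := liftCoord_apply_same _ _ _
        rw [hj]; ring
      have hvun : 0 < ‖v - un n‖ := norm_pos_iff.2 (sub_ne_zero.2 hvne)
      have hv1 : ‖v - un n‖ < δ'/(1 + L₁ + L₂) := lt_of_lt_of_le hv (min_le_left _ _)
      have hv2 : ‖v - un n‖ < 1/2 - dist (un n) u := lt_of_lt_of_le hv (min_le_right _ _)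
      have hvball : v ∈ Metric.ball u 1 := by
        rw [Metric.mem_ball]
        have hd : dist v (un n) < 1/2 - dist (un n) u := by rwa [dist_eq_norm]
        have htri := dist_triangle v (un n) u
        linarith
      have hunball : un n ∈ Metric.ball u 1 := by rw [Metric.mem_ball]; linarith
      have hlip : |(g₂ v - g₁ v) - (g₂ (un n) - g₁ (un n))| ≤ ((L₁:ℝ) + L₂) * ‖v - un n‖ := by
        have e1 := lip_est hL₁ hvball hunball
        have e2 := lip_est hL₂ hvball hunball
        have habs : |(g₂ v - g₁ v) - (g₂ (un n) - g₁ (un n))|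
            ≤ |g₂ v - g₂ (un n)| + |g₁ v - g₁ (un n)| := by
          have he : (g₂ v - g₁ v) - (g₂ (un n) - g₁ (un n))
              = (g₂ v - g₂ (un n)) - (g₁ v - g₁ (un n)) := by ring
          rw [he, sub_eq_add_neg]
          exact (abs_add_le _ _).trans (by rw [abs_neg])
        calc |(g₂ v - g₁ v) - (g₂ (un n) - g₁ (un n))|
            ≤ |g₂ v - g₂ (un n)| + |g₁ v - g₁ (un n)| := habs
          _ ≤ (L₂:ℝ) * ‖v - un n‖ + (L₁:ℝ) * ‖v - un n‖ := add_le_add e2 e1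
          _ = ((L₁:ℝ) + L₂) * ‖v - un n‖ := by ring
      have hysub : y - xs n
          = liftCoord j ((g₂ v - g₁ v) - (g₂ (un n) - g₁ (un n))) (v - un n) := by
        rw [hxsn, hy, liftCoord_sub]
      have hynorm : ‖y - xs n‖ ≤ (1 + L₁ + L₂) * ‖v - un n‖ := by
        rw [hysub]
        refine (norm_le_split j _).trans ?_
        rw [liftCoord_apply_same, dropCoord_liftCoord]
        nlinarith [norm_nonneg (v - un n)]
      have hyne : y ≠ xs n := by
        intro hcontra
        apply hvne
        have := congrArg (dropCoord j) hcontra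
        rwa [hdy] at this
      have hydist : ‖y - xs n‖ < δ' := by
        have h2 : (1 + (L₁:ℝ) + L₂) * ‖v - un n‖ < δ' := by
          have := (lt_div_iff₀ hc).1 hv1
          nlinarith
        linarith
      have hRNy := hRN y hyH hyne hydist
      have hinner : ⟪ws n, y - xs n⟫ = tn n * ((g₂ v - g₁ v) - (g₂ (un n) - g₁ (un n)))
          + ⟪qn n, v - un n⟫ := by
        rw [inner_split j (ws n) (y - xs n), hysub, liftCoord_apply_same, dropCoord_liftCoord]
      rw [hinner] at hRNy
      have hRHS : (ε * tn n / (1 + L₁ + L₂)) * ‖y - xs n‖ ≤ ε * tn n * ‖v - un n‖ := by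
        have h1 : (ε * tn n / (1 + L₁ + L₂)) * ‖y - xs n‖
            ≤ (ε * tn n / (1 + L₁ + L₂)) * ((1 + L₁ + L₂) * ‖v - un n‖) :=
          mul_le_mul_of_nonneg_left hynorm (by positivity)
        have h2 : (ε * tn n / (1 + L₁ + L₂)) * ((1 + L₁ + L₂) * ‖v - un n‖)
            = ε * tn n * ‖v - un n‖ := by
          field_simp
        linarith
      have hA : tn n * ((g₂ v - g₁ v) - (g₂ (un n) - g₁ (un n))) + ⟪qn n, v - un n⟫
          ≤ ε * tn n * ‖v - un n‖ := le_trans hRNy hRHS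
      have hphi : (g₂ v - g₁ v) - (g₂ (un n) - g₁ (un n))
          ≤ ε * ‖v - un n‖ - (tn n)⁻¹ * ⟪qn n, v - un n⟫ := by
        have h2 : tn n * ((g₂ v - g₁ v) - (g₂ (un n) - g₁ (un n)))
            ≤ tn n * (ε * ‖v - un n‖ - (tn n)⁻¹ * ⟪qn n, v - un n⟫) := by
          have h3 : tn n * (ε * ‖v - un n‖ - (tn n)⁻¹ * ⟪qn n, v - un n⟫)
              = ε * tn n * ‖v - un n‖ - ⟪qn n, v - un n⟫ := by
            field_simp
          rw [h3]
          linarith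
        exact le_of_mul_le_mul_left h2 htpos
      have hs2 := hsn n v
      have hsum : ⟪sn n + (tn n)⁻¹ • qn n, v - un n⟫
          = ⟪sn n, v - un n⟫ + (tn n)⁻¹ * ⟪qn n, v - un n⟫ := by
        rw [inner_add_left, real_inner_smul_left]
      rw [hsum]
      linarith
    have hrnG : Tendsto (fun n => sn n + (tn n)⁻¹ • qn n) atTop (𝓝 G₁) :=
      tendsto_subgrad hg₁ hl₁ hd₁.hasGradientAt hunlim hkey
    have hqnlim : Tendsto qn atTop (𝓝 (G₁ - G₂)) := by
      have h1 : Tendsto (fun n => tn n • ((sn n + (tn n)⁻¹ • qn n) - sn n)) atTop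
          (𝓝 ((1:ℝ) • (G₁ - G₂))) := htn.smul (hrnG.sub hsnG)
      rw [one_smul] at h1
      refine h1.congr' ?_
      filter_upwards [hev1] with n htpos
      rw [add_sub_cancel_left, smul_smul, mul_inv_cancel₀ (ne_of_gt htpos), one_smul]
    have hfinal := tendsto_liftCoord j htn hqnlim
    exact hfinal.congr (fun n => liftCoord_drop_self j (ws n))



end
end

section
/- Let f : ℝ^d → ℝ ∪ {+∞} be a closed convex function and C a compact set in ℝ^d such that C ∩ dom f* ≠ ∅. Then for every x ∈ ℝ^d, ∂f_C(x) = conv(∂f_C(x) ∩ C), the convex hull of ∂f_C(x) ∩ C. In particular, f_C is differentiable at x if and only if ∂f_C(x) ∩ C is a singleton, in which case ∂f_C(x) = {∇f_C(x)} ⊂ C. -/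
open Filter Topology Set Pointwise
open scoped RealInnerProductSpace

noncomputable section

private lemma sum_extend' {ι : Type} [Fintype ι] {α : Type*} [AddCommMonoid α]
    (g : ι → α) {n : ℕ} (hm : Fintype.card ι ≤ n) (e : ι ≃ Fin (Fintype.card ι)) :
    (∑ i : Fin n, (if h : (i : ℕ) < Fintype.card ι then g (e.symm ⟨i, h⟩) else 0)) = ∑ j, g j := by
  set G : ℕ → α := fun i => if h : i < Fintype.card ι then g (e.symm ⟨i, h⟩) else 0 with hG
  have h1 : (∑ i : Fin n, (if h : (i : ℕ) < Fintype.card ι then g (e.symm ⟨i, h⟩) else 0))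
      = ∑ i ∈ Finset.range n, G i := Fin.sum_univ_eq_sum_range G n
  have h2 : ∑ i ∈ Finset.range n, G i = ∑ i ∈ Finset.range (Fintype.card ι), G i := by
    refine (Finset.sum_subset (Finset.range_subset_range.2 hm) ?_).symm
    intro i _ hi
    simp only [Finset.mem_range] at hi
    simp [hG, hi]
  have h3 : ∑ i ∈ Finset.range (Fintype.card ι), G i = ∑ i : Fin (Fintype.card ι), g (e.symm i) := by
    rw [← Fin.sum_univ_eq_sum_range]
    refine Finset.sum_congr rfl fun i _ => ?_
    simp [hG, i.isLt]
  rw [h1, h2, h3, Equiv.sum_comp e.symm g]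

private lemma isCompact_convexHull' {d : ℕ} {s : Set (Euc d)} (hs : IsCompact s) :
    IsCompact (convexHull ℝ s) := by
  rcases s.eq_empty_or_nonempty with rfl | ⟨p₀, hp₀⟩
  · simp
  set n := d + 1 with hn
  set T : (Fin n → ℝ) × (Fin n → Euc d) → Euc d := fun p => ∑ i, p.1 i • p.2 i with hT
  have hTcont : Continuous T := by
    refine continuous_finset_sum _ fun i _ => ?_
    exact ((continuous_apply i).comp continuous_fst).smul ((continuous_apply i).comp continuous_snd)
  have hK : IsCompact ((stdSimplex ℝ (Fin n)) ×ˢ (Set.pi Set.univ fun _ : Fin n => s)) :=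
    (isCompact_stdSimplex (𝕜 := ℝ) (ι := Fin n)).prod (isCompact_univ_pi fun _ => hs)
  have himg : convexHull ℝ s = T '' ((stdSimplex ℝ (Fin n)) ×ˢ (Set.pi Set.univ fun _ : Fin n => s)) := by
    apply Subset.antisymm
    · intro x hx
      obtain ⟨ι, hι, z, w, hzs, hzai, hwpos, hwsum, hx⟩ := eq_pos_convex_span_of_mem_convexHull hx
      have hcard : Fintype.card ι ≤ n := by
        have h := hzai.card_le_finrank_succ
        have h2 : Module.finrank ℝ ↥(vectorSpan ℝ (Set.range z)) ≤ Module.finrank ℝ (Euc d) :=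
          Submodule.finrank_le _
        have h3 : Module.finrank ℝ (Euc d) = d := finrank_euclideanSpace_fin
        omega
      set e : ι ≃ Fin (Fintype.card ι) := Fintype.equivFin ι with he
      refine ⟨⟨fun i => if h : (i : ℕ) < Fintype.card ι then w (e.symm ⟨i, h⟩) else 0,
              fun i => if h : (i : ℕ) < Fintype.card ι then z (e.symm ⟨i, h⟩) else p₀⟩, ⟨?_, ?_⟩, ?_⟩
      · constructor
        · intro i; dsimp only; split
          · exact (hwpos _).le
          · exact le_rfl
        · rw [sum_extend' w hcard e]; exact hwsum
      · intro i _; dsimp only; split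
        · exact hzs (Set.mem_range_self _)
        · exact hp₀
      · show (∑ i : Fin n, _) = x
        rw [← hx, ← sum_extend' (fun j => w j • z j) hcard e]
        refine Finset.sum_congr rfl fun i _ => ?_
        dsimp only
        split
        · rfl
        · simp
    · rintro _ ⟨⟨w, z⟩, ⟨hw, hz⟩, rfl⟩
      refine Convex.sum_mem (convex_convexHull ℝ s) (fun i _ => hw.1 i) hw.2 ?_
      exact fun i _ => subset_convexHull ℝ s (hz i (mem_univ i))
  rw [himg]
  exact hK.image hTcont

/-- Lemma 2 of the paper, second part. -/
theorem stmt3 {d : ℕ} (f : Euc d → EReal) (hf : ClosedConvexFun f)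
    (C : Set (Euc d)) (hC : IsCompact C)
    (hCdom : (C ∩ {y | fconj f y ≠ ⊤}).Nonempty) (x : Euc d) :
    subdiff (restrSup f C) x = convexHull ℝ (subdiff (restrSup f C) x ∩ C) ∧
    (DifferentiableAt ℝ (toRealFun (restrSup f C)) x ↔
      ∃ y, subdiff (restrSup f C) x ∩ C = {y}) ∧
    (DifferentiableAt ℝ (toRealFun (restrSup f C)) x →
      subdiff (restrSup f C) x = {gradient (toRealFun (restrSup f C)) x} ∧
      gradient (toRealFun (restrSup f C)) x ∈ C) := by
  classical
  obtain ⟨x₀, hx₀top⟩ := hf.2.2.1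
  have hx₀bot : f x₀ ≠ ⊥ := hf.2.1 x₀
  set r₀ : ℝ := (f x₀).toReal with hr₀
  have hfx₀ : f x₀ = (r₀ : EReal) := (EReal.coe_toReal hx₀top hx₀bot).symm
  obtain ⟨y₁, hy₁C, hy₁dom⟩ := hCdom
  obtain ⟨R, hR⟩ := (hC.isBounded).exists_norm_le
  have hR0 : 0 ≤ R := le_trans (norm_nonneg y₁) (hR y₁ hy₁C)
  -- conjugate bounds
  have hconj_lb : ∀ y : Euc d, ((⟪x₀, y⟫ - r₀ : ℝ) : EReal) ≤ fconj f y := by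
    intro y
    rw [EReal.coe_sub]
    have : ((⟪x₀, y⟫ : ℝ) : EReal) - f x₀ ≤ fconj f y :=
      le_iSup (fun x' => ((⟪x', y⟫ : ℝ) : EReal) - f x') x₀
    rwa [hfx₀] at this
  have hconj_bot : ∀ y : Euc d, fconj f y ≠ ⊥ := by
    intro y h
    have h2 := hconj_lb y
    rw [h, le_bot_iff] at h2
    exact EReal.coe_ne_bot _ h2
  have hconj_lsc : LowerSemicontinuous (fconj f) := by
    apply lowerSemicontinuous_iSup
    intro x'
    rcases eq_or_ne (f x') ⊤ with h | h
    · have heq : (fun y : Euc d => ((⟪x', y⟫ : ℝ) : EReal) - f x') = fun _ => (⊥ : EReal) := by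
        funext y; rw [h, EReal.sub_top]
      rw [heq]
      exact lowerSemicontinuous_const
    · rcases eq_or_ne (f x') ⊥ with h2 | h2
      · have heq : (fun y : Euc d => ((⟪x', y⟫ : ℝ) : EReal) - f x') = fun _ => (⊤ : EReal) := by
        -- ↑r - ⊥ = ⊤
          funext y; rw [h2]
          rfl
        rw [heq]
        exact lowerSemicontinuous_const
      · have hc : f x' = (((f x').toReal : ℝ) : EReal) := (EReal.coe_toReal h h2).symm
        have heq : (fun y : Euc d => ((⟪x', y⟫ : ℝ) : EReal) - f x')
            = fun y => ((⟪x', y⟫ - (f x').toReal : ℝ) : EReal) := by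
          funext y; rw [EReal.coe_sub, ← hc]
        rw [heq]
        apply Continuous.lowerSemicontinuous
        exact continuous_coe_real_ereal.comp ((continuous_const.inner continuous_id).sub continuous_const)
  set F : Euc d → EReal := restrSup f C with hFdef
  set φ : Euc d → ℝ := toRealFun F with hφdef
  have hFle : ∀ (x' : Euc d) (y : Euc d), y ∈ C → ((⟪x', y⟫ : ℝ) : EReal) - fconj f y ≤ F x' := by
    intro x' y hy
    exact le_iSup₂ (f := fun y (_ : y ∈ C) => ((⟪x', y⟫ : ℝ) : EReal) - fconj f y) y hy
  have hFub : ∀ x' : Euc d, F x' ≤ ((‖x' - x₀‖ * R + r₀ : ℝ) : EReal) := by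
    intro x'
    refine iSup₂_le fun y hy => ?_
    calc ((⟪x', y⟫ : ℝ) : EReal) - fconj f y
        ≤ ((⟪x', y⟫ : ℝ) : EReal) - ((⟪x₀, y⟫ - r₀ : ℝ) : EReal) :=
          EReal.sub_le_sub le_rfl (hconj_lb y)
      _ = ((⟪x', y⟫ - (⟪x₀, y⟫ - r₀) : ℝ) : EReal) := by norm_cast
      _ ≤ ((‖x' - x₀‖ * R + r₀ : ℝ) : EReal) := by
          rw [EReal.coe_le_coe_iff]
          have h2 : ⟪x' - x₀, y⟫ ≤ ‖x' - x₀‖ * ‖y‖ := real_inner_le_norm _ _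
          have h3 : ‖x' - x₀‖ * ‖y‖ ≤ ‖x' - x₀‖ * R :=
            mul_le_mul_of_nonneg_left (hR y hy) (norm_nonneg _)
          have h4 : ⟪x' - x₀, y⟫ = ⟪x', y⟫ - ⟪x₀, y⟫ := inner_sub_left _ _ _
          linarith
  have hc₁ : fconj f y₁ = (((fconj f y₁).toReal : ℝ) : EReal) :=
    (EReal.coe_toReal hy₁dom (hconj_bot y₁)).symm
  have hFlb : ∀ x' : Euc d, ((⟪x', y₁⟫ - (fconj f y₁).toReal : ℝ) : EReal) ≤ F x' := by
    intro x'
    calc ((⟪x', y₁⟫ - (fconj f y₁).toReal : ℝ) : EReal)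
        = ((⟪x', y₁⟫ : ℝ) : EReal) - fconj f y₁ := by rw [EReal.coe_sub, ← hc₁]
      _ ≤ F x' := hFle x' y₁ hy₁C
  have hFreal : ∀ x' : Euc d, F x' = ((φ x' : ℝ) : EReal) := by
    intro x'
    have h1 : F x' ≠ ⊥ := ((EReal.bot_lt_coe _).trans_le (hFlb x')).ne'
    have h2 : F x' ≠ ⊤ := ((hFub x').trans_lt (EReal.coe_lt_top _)).ne
    exact (EReal.coe_toReal h2 h1).symm
  have hsub : ∀ (x' : Euc d) (w : Euc d),
      w ∈ subdiff F x' ↔ ∀ z : Euc d, ⟪z, w⟫ + φ x' ≤ φ (x' + z) := by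
    intro x' w
    simp only [subdiff, Set.mem_setOf_eq]
    refine forall_congr' fun z => ?_
    rw [hFreal x', hFreal (x' + z), ← EReal.coe_add, EReal.coe_le_coe_iff]
  -- cluster lemma
  have hcluster : ∀ (x' yb : Euc d) (ys : ℕ → Euc d) (as : ℕ → ℝ),
      (∀ n, ys n ∈ C) → (∀ n, fconj f (ys n) = ((as n : ℝ) : EReal)) →
      Tendsto ys atTop (𝓝 yb) → Tendsto as atTop (𝓝 (⟪x', yb⟫ - φ x')) →
      yb ∈ argMaxOn f C x' := by
    intro x' yb ys as hysC hysconj hystend hastend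
    have hybC : yb ∈ C := hC.isClosed.mem_of_tendsto hystend (Eventually.of_forall hysC)
    have hconjle : fconj f yb ≤ ((⟪x', yb⟫ - φ x' : ℝ) : EReal) := by
      by_contra hcon
      push_neg at hcon
      obtain ⟨c, hc1, hc2⟩ := exists_between hcon
      have h1 : ∀ᶠ y in 𝓝 yb, c < fconj f y := hconj_lsc yb c hc2
      have h2 : ∀ᶠ n in atTop, c < fconj f (ys n) := hystend.eventually h1
      have h4 : Tendsto (fun n => ((as n : ℝ) : EReal)) atTop (𝓝 ((⟪x', yb⟫ - φ x' : ℝ) : EReal)) :=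
        (continuous_coe_real_ereal.tendsto _).comp hastend
      have h3 : c ≤ ((⟪x', yb⟫ - φ x' : ℝ) : EReal) := by
        refine ge_of_tendsto h4 ?_
        filter_upwards [h2] with n hn
        exact le_of_lt (by rwa [hysconj n] at hn)
      exact absurd (h3.trans_lt hc1) (lt_irrefl _)
    have hterm : ((⟪x', yb⟫ : ℝ) : EReal) - fconj f yb = F x' := by
      refine le_antisymm (hFle x' yb hybC) ?_
      rw [hFreal x']
      calc ((φ x' : ℝ) : EReal) = ((⟪x', yb⟫ : ℝ) : EReal) - ((⟪x', yb⟫ - φ x' : ℝ) : EReal) := by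
            rw [← EReal.coe_sub, EReal.coe_eq_coe_iff]; ring
        _ ≤ ((⟪x', yb⟫ : ℝ) : EReal) - fconj f yb := EReal.sub_le_sub le_rfl hconjle
    exact ⟨hybC, fun z hz => by rw [hterm]; exact hFle x' z hz⟩
  -- attainment
  have hattain : ∀ x' : Euc d, ∃ y, y ∈ argMaxOn f C x' := by
    intro x'
    have hex : ∀ n : ℕ, ∃ y, y ∈ C ∧
        ((φ x' - 1/(n+1) : ℝ) : EReal) < ((⟪x', y⟫ : ℝ) : EReal) - fconj f y := by
      intro n
      have hlt : ((φ x' - 1/(n+1) : ℝ) : EReal) < F x' := by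
        rw [hFreal x', EReal.coe_lt_coe_iff]
        have : 0 < 1/((n : ℝ)+1) := by positivity
        linarith
      have hlt2 : ((φ x' - 1/(n+1) : ℝ) : EReal)
          < ⨆ y ∈ C, (((⟪x', y⟫ : ℝ) : EReal) - fconj f y) := hlt
      rw [lt_iSup_iff] at hlt2
      obtain ⟨y, hy⟩ := hlt2
      rw [lt_iSup_iff] at hy
      obtain ⟨hyC, hy2⟩ := hy
      exact ⟨y, hyC, hy2⟩
    choose ys hysC hysgt using hex
    have hnetop : ∀ n, fconj f (ys n) ≠ ⊤ := by
      intro n h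
      have h2 := hysgt n
      rw [h, EReal.sub_top] at h2
      exact absurd h2 (not_lt_bot)
    set as : ℕ → ℝ := fun n => (fconj f (ys n)).toReal with has
    have hasconj : ∀ n, fconj f (ys n) = ((as n : ℝ) : EReal) :=
      fun n => (EReal.coe_toReal (hnetop n) (hconj_bot _)).symm
    have hub : ∀ n, ⟪x', ys n⟫ - as n ≤ φ x' := by
      intro n
      have h2 := hFle x' (ys n) (hysC n)
      rw [hasconj n, ← EReal.coe_sub, hFreal x', EReal.coe_le_coe_iff] at h2
      exact h2
    have hlb : ∀ n, φ x' - 1/(n+1) < ⟪x', ys n⟫ - as n := by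
      intro n
      have h2 := hysgt n
      rw [hasconj n, ← EReal.coe_sub, EReal.coe_lt_coe_iff] at h2
      exact h2
    obtain ⟨yb, hybC, σ, hσ, hσt⟩ := hC.tendsto_subseq hysC
    have hts : Tendsto (fun n => 1/((σ n : ℝ)+1)) atTop (𝓝 0) := by
      refine tendsto_one_div_add_atTop_nhds_zero_nat.comp hσ.tendsto_atTop
    have h1 : Tendsto (fun n => ⟪x', ys (σ n)⟫ - as (σ n)) atTop (𝓝 (φ x')) := by
      refine tendsto_of_tendsto_of_tendsto_of_le_of_le (g := fun n => φ x' - 1/((σ n : ℝ)+1))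
        (h := fun _ => φ x') ?_ tendsto_const_nhds (fun n => (hlb (σ n)).le) (fun n => hub (σ n))
      simpa using (tendsto_const_nhds (x := φ x')).sub hts
    have h2 : Tendsto (fun n => ⟪x', ys (σ n)⟫) atTop (𝓝 ⟪x', yb⟫) :=
      (tendsto_const_nhds (x := x')).inner hσt
    have h3 : Tendsto (fun n => as (σ n)) atTop (𝓝 (⟪x', yb⟫ - φ x')) := by
      have := h2.sub h1
      simpa using this
    exact ⟨yb, hcluster x' yb (fun n => ys (σ n)) (fun n => as (σ n))
      (fun n => hysC (σ n)) (fun n => hasconj (σ n)) hσt h3⟩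
  -- characterization of argmax
  have hargchar : ∀ (x' y : Euc d), y ∈ argMaxOn f C x' →
      fconj f y = ((⟪x', y⟫ - φ x' : ℝ) : EReal) := by
    intro x' y hy
    obtain ⟨yhat, hyhat⟩ := hattain x'
    have htermy : ((⟪x', y⟫ : ℝ) : EReal) - fconj f y = F x' := by
      refine le_antisymm (hFle x' y hy.1) ?_
      -- F x' is sup; y is max so term y ≥ term z for all z ∈ C
      refine iSup₂_le fun z hz => hy.2 z hz
    have hnetop : fconj f y ≠ ⊤ := by
      intro h
      rw [h, EReal.sub_top, hFreal x'] at htermy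
      exact EReal.coe_ne_bot _ htermy.symm
    have hcy : fconj f y = (((fconj f y).toReal : ℝ) : EReal) :=
      (EReal.coe_toReal hnetop (hconj_bot y)).symm
    rw [hcy, ← EReal.coe_sub, hFreal x', EReal.coe_eq_coe_iff] at htermy
    rw [hcy, EReal.coe_eq_coe_iff]
    linarith
  -- key inequality
  have hkey : ∀ (x₁ x₂ y : Euc d), y ∈ argMaxOn f C x₂ → φ x₂ - φ x₁ ≤ ⟪x₂ - x₁, y⟫ := by
    intro x₁ x₂ y hy
    have hchar := hargchar x₂ y hy
    have h1 := hFle x₁ y hy.1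
    rw [hchar, ← EReal.coe_sub, hFreal x₁, EReal.coe_le_coe_iff] at h1
    have h2 : ⟪x₂ - x₁, y⟫ = ⟪x₂, y⟫ - ⟪x₁, y⟫ := inner_sub_left _ _ _
    linarith
  -- Lipschitz / continuity
  have hlipkey : ∀ a b : Euc d, φ a - φ b ≤ R * ‖a - b‖ := by
    intro a b
    obtain ⟨y, hy⟩ := hattain a
    have h1 := hkey b a y hy
    have h2 : ⟪a - b, y⟫ ≤ ‖a - b‖ * ‖y‖ := real_inner_le_norm _ _
    have h3 : ‖y‖ ≤ R := hR y hy.1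
    nlinarith [norm_nonneg (a - b)]
  have hφtend : ∀ (xs : ℕ → Euc d) (x' : Euc d), Tendsto xs atTop (𝓝 x') →
      Tendsto (fun n => φ (xs n)) atTop (𝓝 (φ x')) := by
    intro xs x' hxs
    rw [← tendsto_sub_nhds_zero_iff]
    have h0 : Tendsto (fun n => R * ‖xs n - x'‖) atTop (𝓝 0) := by
      have h1 : Tendsto (fun n => ‖xs n - x'‖) atTop (𝓝 0) := by
        rw [← tendsto_sub_nhds_zero_iff] at hxs
        simpa using hxs.norm
      simpa using h1.const_mul R
    refine squeeze_zero_norm (fun n => ?_) h0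
    rw [Real.norm_eq_abs, abs_sub_le_iff]
    constructor
    · exact hlipkey (xs n) x'
    · rw [norm_sub_rev]
      exact hlipkey x' (xs n)
  -- argmax limit
  have hlimarg : ∀ (xs : ℕ → Euc d) (x' : Euc d) (ys : ℕ → Euc d) (yb : Euc d),
      Tendsto xs atTop (𝓝 x') → (∀ n, ys n ∈ argMaxOn f C (xs n)) → Tendsto ys atTop (𝓝 yb) →
      yb ∈ argMaxOn f C x' := by
    intro xs x' ys yb hxs hys hyt
    set as : ℕ → ℝ := fun n => ⟪xs n, ys n⟫ - φ (xs n) with has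
    have h1 : ∀ n, fconj f (ys n) = ((as n : ℝ) : EReal) :=
      fun n => hargchar (xs n) (ys n) (hys n)
    have h2 : Tendsto as atTop (𝓝 (⟪x', yb⟫ - φ x')) :=
      (hxs.inner hyt).sub (hφtend xs x' hxs)
    exact hcluster x' yb ys as (fun n => (hys n).1) h1 hyt h2
  -- argmax ⊆ subdiff ∩ C
  have hArgSub : ∀ x' : Euc d, argMaxOn f C x' ⊆ subdiff F x' ∩ C := by
    intro x' y hy
    refine ⟨(hsub x' y).2 fun z => ?_, hy.1⟩
    have h := hkey (x' + z) x' y hy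
    have h2 : x' - (x' + z) = -z := by abel
    rw [h2, inner_neg_left] at h
    linarith
  -- convexity of subdiff
  have hsubconv : Convex ℝ (subdiff F x) := by
    intro w₁ hw₁ w₂ hw₂ a b ha hb hab
    rw [hsub] at hw₁ hw₂ ⊢
    intro z
    have h1 := mul_le_mul_of_nonneg_left (hw₁ z) ha
    have h2 := mul_le_mul_of_nonneg_left (hw₂ z) hb
    have h3 : ⟪z, a • w₁ + b • w₂⟫ = a * ⟪z, w₁⟫ + b * ⟪z, w₂⟫ := by
      rw [inner_add_right, real_inner_smul_right, real_inner_smul_right]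
    rw [h3]
    have e2 : a * φ x + b * φ x = φ x := by rw [← add_mul, hab, one_mul]
    have e3 : a * φ (x + z) + b * φ (x + z) = φ (x + z) := by rw [← add_mul, hab, one_mul]
    nlinarith [h1, h2]
  -- closedness/compactness of argmax
  have hArgClosed : IsClosed (argMaxOn f C x) := by
    apply IsSeqClosed.isClosed
    intro ys yb hys hyt
    exact hlimarg (fun _ => x) x ys yb tendsto_const_nhds hys hyt
  have hArgCompact : IsCompact (argMaxOn f C x) :=
    hC.of_isClosed_subset hArgClosed (fun y hy => hy.1)
  -- separation: subdiff ⊆ convexHull argmax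
  have hsep : subdiff F x ⊆ convexHull ℝ (argMaxOn f C x) := by
    intro w hw
    by_contra hcon
    have hKcl : IsClosed (convexHull ℝ (argMaxOn f C x)) :=
      (isCompact_convexHull' hArgCompact).isClosed
    obtain ⟨l, u, hlu1, hlu2⟩ :=
      geometric_hahn_banach_closed_point (convex_convexHull ℝ _) hKcl hcon
    obtain ⟨z, hz⟩ := (InnerProductSpace.toDual ℝ (Euc d)).surjective l
    have hlz : ∀ v, l v = ⟪z, v⟫ := by
      intro v
      rw [← hz, InnerProductSpace.toDual_apply_apply]
    have hts : ∀ n : ℕ, (0 : ℝ) < 1/(n+1) := fun n => by positivity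
    choose ys hys using fun n : ℕ => hattain (x + (1/((n:ℝ)+1)) • z)
    obtain ⟨yb, hybC, σ, hσ, hσt⟩ := hC.tendsto_subseq (fun n => (hys n).1)
    have htts : Tendsto (fun n => 1/((σ n : ℝ)+1)) atTop (𝓝 0) :=
      tendsto_one_div_add_atTop_nhds_zero_nat.comp hσ.tendsto_atTop
    have hxt : Tendsto (fun n => x + (1/((σ n : ℝ)+1)) • z) atTop (𝓝 x) := by
      have : Tendsto (fun n => (1/((σ n : ℝ)+1)) • z) atTop (𝓝 (0 : Euc d)) := by
        simpa using htts.smul_const z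
      simpa using (tendsto_const_nhds (x := x)).add this
    have hybArg : yb ∈ argMaxOn f C x :=
      hlimarg _ x (fun n => ys (σ n)) yb hxt (fun n => hys (σ n)) hσt
    have hbound : ∀ n : ℕ, ⟪z, w⟫ ≤ ⟪z, ys n⟫ := by
      intro n
      set t : ℝ := 1/((n:ℝ)+1) with ht
      have h1 : ⟪t • z, w⟫ + φ x ≤ φ (x + t • z) := (hsub x w).1 hw (t • z)
      have h2 : φ (x + t • z) - φ x ≤ ⟪t • z, ys n⟫ := by
        have h := hkey x (x + t • z) (ys n) (hys n)
        rwa [add_sub_cancel_left] at h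
      have h3 : ⟪t • z, w⟫ ≤ ⟪t • z, ys n⟫ := by linarith
      rw [real_inner_smul_left, real_inner_smul_left] at h3
      exact le_of_mul_le_mul_left h3 (hts n)
    have hlim2 : ⟪z, w⟫ ≤ ⟪z, yb⟫ := by
      refine ge_of_tendsto ((tendsto_const_nhds (x := z)).inner hσt) ?_
      exact Eventually.of_forall fun n => hbound (σ n)
    have hc1 : l yb < u := hlu1 yb (subset_convexHull ℝ _ hybArg)
    have hc2 : u < l w := hlu2
    rw [hlz] at hc1 hc2
    linarith
  -- statement (1)
  have main1 : subdiff F x = convexHull ℝ (subdiff F x ∩ C) := by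
    apply Subset.antisymm
    · exact hsep.trans (convexHull_mono (hArgSub x))
    · exact convexHull_min Set.inter_subset_left hsubconv
  -- differentiable → gradient facts
  have hgrad_of_diff : DifferentiableAt ℝ φ x →
      subdiff F x = {gradient φ x} ∧ gradient φ x ∈ C ∧ subdiff F x ∩ C = {gradient φ x} := by
    intro hd
    obtain ⟨w₀, hw₀⟩ := hattain x
    have hw₀sub : w₀ ∈ subdiff F x := (hArgSub x hw₀).1
    have hw₀C : w₀ ∈ C := hw₀.1
    have huniq : ∀ w ∈ subdiff F x, ∀ z : Euc d, ⟪z, w⟫ = fderiv ℝ φ x z := by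
      intro w hw z
      rw [hsub] at hw
      set ψ : ℝ → ℝ := fun t => φ (x + t • z) with hψ
      have hψd : HasDerivAt ψ (fderiv ℝ φ x z) 0 := by
        have h1 : HasFDerivAt φ (fderiv ℝ φ x) x := hd.hasFDerivAt
        have h2 : HasDerivAt (fun t : ℝ => x + t • z) z 0 := by
          simpa using ((hasDerivAt_id (0 : ℝ)).smul_const z).const_add x
        have h1' : HasFDerivAt φ (fderiv ℝ φ x) (x + (0:ℝ) • z) := by simpa using h1
        have h3 := h1'.comp_hasDerivAt 0 h2
        exact h3
      have hquot : ∀ t : ℝ, t * ⟪z, w⟫ ≤ ψ t - ψ 0 := by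
        intro t
        have h1 := hw (t • z)
        rw [real_inner_smul_left] at h1
        have h2 : ψ 0 = φ x := by simp [hψ]
        have h3 : ψ t = φ (x + t • z) := rfl
        linarith
      have hslope : Tendsto (slope ψ 0) (𝓝[≠] 0) (𝓝 (fderiv ℝ φ x z)) :=
        hasDerivAt_iff_tendsto_slope.1 hψd
      have hge : ⟪z, w⟫ ≤ fderiv ℝ φ x z := by
        refine ge_of_tendsto (hslope.mono_left
          (nhdsWithin_mono 0 fun t (ht : t ∈ Ioi (0:ℝ)) => ne_of_gt ht)) ?_
        filter_upwards [self_mem_nhdsWithin] with t ht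
        have ht' : (0:ℝ) < t := ht
        rw [slope_def_field, sub_zero, le_div_iff₀ ht']
        have := hquot t
        linarith
      have hle : fderiv ℝ φ x z ≤ ⟪z, w⟫ := by
        refine le_of_tendsto (hslope.mono_left
          (nhdsWithin_mono 0 fun t (ht : t ∈ Iio (0:ℝ)) => ne_of_lt ht)) ?_
        filter_upwards [self_mem_nhdsWithin] with t ht
        have ht' : t < (0:ℝ) := ht
        rw [slope_def_field, sub_zero, div_le_iff_of_neg ht']
        have := hquot t
        linarith
      linarith
    have heq : ∀ w ∈ subdiff F x, w = w₀ := by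
      intro w hw
      refine ext_inner_left ℝ fun v => ?_
      rw [huniq w hw v, huniq w₀ hw₀sub v]
    have hgradeq : gradient φ x = w₀ := by
      have hF2 : HasFDerivAt φ (fderiv ℝ φ x) x := hd.hasFDerivAt
      have hdual : (InnerProductSpace.toDual ℝ (Euc d)) w₀ = fderiv ℝ φ x := by
        apply ContinuousLinearMap.ext
        intro v
        rw [InnerProductSpace.toDual_apply_apply, real_inner_comm]
        exact huniq w₀ hw₀sub v
      have hg : HasGradientAt φ w₀ x := by
        rw [hasGradientAt_iff_hasFDerivAt, hdual]
        exact hF2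
      exact hg.gradient
    have hset : subdiff F x = {w₀} := by
      apply Subset.antisymm
      · exact fun w hw => heq w hw
      · intro w hw
        rw [Set.mem_singleton_iff] at hw
        rw [hw]
        exact hw₀sub
    rw [hgradeq]
    refine ⟨hset, hw₀C, ?_⟩
    rw [hset]
    exact Set.inter_eq_left.2 (Set.singleton_subset_iff.2 hw₀C)
  -- singleton → differentiable
  have hdiff_of_singleton : ∀ w : Euc d, subdiff F x ∩ C = {w} → DifferentiableAt ℝ φ x := by
    intro w hwset
    have hwmem : w ∈ subdiff F x ∩ C := by
      rw [hwset]; exact Set.mem_singleton w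
    have hwsub : w ∈ subdiff F x := hwmem.1
    have hArgw : ∀ y ∈ argMaxOn f C x, y = w := by
      intro y hy
      have := hArgSub x hy
      rw [hwset] at this
      exact this
    have hclaim : ∀ ε > (0:ℝ), ∃ δ > (0:ℝ), ∀ z : Euc d, ‖z‖ < δ →
        ∀ y ∈ argMaxOn f C (x + z), ‖y - w‖ ≤ ε := by
      intro ε hε
      by_contra hcon
      push_neg at hcon
      have hch : ∀ n : ℕ, ∃ z : Euc d, ‖z‖ < 1/((n:ℝ)+1) ∧
          ∃ y ∈ argMaxOn f C (x + z), ε < ‖y - w‖ := by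
        intro n
        obtain ⟨z, hz1, y, hy1, hy2⟩ := hcon (1/((n:ℝ)+1)) (by positivity)
        exact ⟨z, hz1, y, hy1, hy2⟩
      choose zs hzs ys hys hyw using hch
      have hysC : ∀ n, ys n ∈ C := fun n => (hys n).1
      obtain ⟨yb, hybC, σ, hσ, hσt⟩ := hC.tendsto_subseq hysC
      have hzt : Tendsto (fun n => x + zs (σ n)) atTop (𝓝 x) := by
        have h1 : Tendsto (fun n => zs (σ n)) atTop (𝓝 (0 : Euc d)) := by
          refine squeeze_zero_norm (fun n => (hzs (σ n)).le) ?_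
          exact tendsto_one_div_add_atTop_nhds_zero_nat.comp hσ.tendsto_atTop
        simpa using (tendsto_const_nhds (x := x)).add h1
      have hybArg : yb ∈ argMaxOn f C x :=
        hlimarg _ x (fun n => ys (σ n)) yb hzt (fun n => hys (σ n)) hσt
      have hybw : yb = w := hArgw yb hybArg
      have hlim : Tendsto (fun n => ‖ys (σ n) - w‖) atTop (𝓝 ‖yb - w‖) :=
        ((hσt.sub tendsto_const_nhds).norm)
      have hle : ε ≤ ‖yb - w‖ :=
        ge_of_tendsto hlim (Eventually.of_forall fun n => (hyw (σ n)).le)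
      rw [hybw, sub_self, norm_zero] at hle
      linarith
    have hfd : HasFDerivAt φ ((InnerProductSpace.toDual ℝ (Euc d)) w) x := by
      rw [hasFDerivAt_iff_isLittleO_nhds_zero, Asymptotics.isLittleO_iff]
      intro c hc
      obtain ⟨δ, hδ, hδ2⟩ := hclaim c hc
      rw [Metric.eventually_nhds_iff]
      refine ⟨δ, hδ, fun z hz => ?_⟩
      have hzn : ‖z‖ < δ := by rwa [dist_zero_right] at hz
      obtain ⟨y, hy⟩ := hattain (x + z)
      have h1 : ⟪z, w⟫ + φ x ≤ φ (x + z) := (hsub x w).1 hwsub z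
      have h2 : φ (x + z) - φ x ≤ ⟪z, y⟫ := by
        have := hkey x (x + z) y hy
        rwa [add_sub_cancel_left] at this
      have h3 : ‖y - w‖ ≤ c := hδ2 z hzn y hy
      have h4 : ⟪z, y⟫ - ⟪z, w⟫ = ⟪z, y - w⟫ := (inner_sub_right _ _ _).symm
      have h5 : ⟪z, y - w⟫ ≤ ‖z‖ * ‖y - w‖ := real_inner_le_norm _ _
      have h6 : ((InnerProductSpace.toDual ℝ (Euc d)) w) z = ⟪w, z⟫ :=
        InnerProductSpace.toDual_apply_apply
      have h7 := mul_le_mul_of_nonneg_left h3 (norm_nonneg z)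
      have h8 : 0 ≤ c * ‖z‖ := mul_nonneg hc.le (norm_nonneg z)
      rw [h6, real_inner_comm z w, Real.norm_eq_abs, abs_le]
      constructor
      · linarith
      · nlinarith [h7]
    exact hfd.differentiableAt
  refine ⟨main1, ⟨fun hd => ⟨gradient φ x, (hgrad_of_diff hd).2.2⟩,
    fun ⟨w, hw⟩ => hdiff_of_singleton w hw⟩,
    fun hd => ⟨(hgrad_of_diff hd).1, (hgrad_of_diff hd).2.1⟩⟩

end
end

section
/- Let f : ℝ^d → ℝ ∪ {+∞} be a closed convex function and C a compact set in ℝ^d such that C ∩ dom f* ≠ ∅. Then for every x ∈ ℝ^d the following are equivalent: (i) ∂f(x) ∩ C ≠ ∅; (ii) f(x) = f_C(x); (iii) ∂f(x) ∩ C = ∂f_C(x) ∩ C. -/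
open Filter Topology Set Pointwise
open scoped RealInnerProductSpace

noncomputable section

section Helpers

variable {d : ℕ} {f : Euc d → EReal} {x₀ : Euc d}

lemma conj_ne_bot (hbot : ∀ x, f x ≠ ⊥) (hx₀ : f x₀ ≠ ⊤) (y : Euc d) : fconj f y ≠ ⊥ := by
  have h := le_iSup (fun x => ((⟪x, y⟫ : ℝ) : EReal) - f x) x₀
  rw [← EReal.coe_toReal hx₀ (hbot x₀), ← EReal.coe_sub,
    show (⨆ x, ((⟪x, y⟫ : ℝ) : EReal) - f x) = fconj f y from rfl] at h
  intro hb
  rw [hb, le_bot_iff] at h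
  exact EReal.coe_ne_bot _ h

lemma fenchel (x y : Euc d) : ((⟪x, y⟫ : ℝ) : EReal) - f x ≤ fconj f y :=
  le_iSup (fun x => ((⟪x, y⟫ : ℝ) : EReal) - f x) x

lemma term_le (hbot : ∀ x, f x ≠ ⊥) (hx₀ : f x₀ ≠ ⊤) (x y : Euc d) :
    ((⟪x, y⟫ : ℝ) : EReal) - fconj f y ≤ f x := by
  by_cases hT : fconj f y = ⊤
  · rw [hT, EReal.sub_top]; exact bot_le
  by_cases hfx : f x = ⊤
  · rw [hfx]; exact le_top
  have h1 := EReal.coe_toReal hT (conj_ne_bot hbot hx₀ y)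
  have h2 := EReal.coe_toReal hfx (hbot x)
  have h := fenchel (f := f) x y
  rw [← h1, ← h2, ← EReal.coe_sub, EReal.coe_le_coe_iff] at h
  rw [← h1, ← h2, ← EReal.coe_sub, EReal.coe_le_coe_iff]
  linarith

lemma restr_le (hbot : ∀ x, f x ≠ ⊥) (hx₀ : f x₀ ≠ ⊤) (C : Set (Euc d)) (x : Euc d) :
    restrSup f C x ≤ f x :=
  iSup₂_le fun y _ => term_le hbot hx₀ x y

lemma fconj_lsc (hbot : ∀ x, f x ≠ ⊥) : LowerSemicontinuous (fconj f) := by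
  apply lowerSemicontinuous_iSup
  intro x
  by_cases hx : f x = ⊤
  · have : (fun y : Euc d => ((⟪x, y⟫ : ℝ) : EReal) - f x) = fun _ => ⊥ := by
      funext y; rw [hx, EReal.sub_top]
    rw [this]; exact lowerSemicontinuous_const
  · have : (fun y : Euc d => ((⟪x, y⟫ : ℝ) : EReal) - f x)
        = fun y => ((⟪x, y⟫ - (f x).toReal : ℝ) : EReal) := by
      funext y; rw [EReal.coe_sub, EReal.coe_toReal hx (hbot x)]
    rw [this]
    exact (continuous_coe_real_ereal.comp
      ((continuous_const.inner continuous_id).sub continuous_const)).lowerSemicontinuous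

lemma subdiff_ne_top (hx₀ : f x₀ ≠ ⊤) {x y : Euc d} (hy : y ∈ subdiff f x) : f x ≠ ⊤ := by
  intro hT
  have h := hy (x₀ - x)
  rw [hT, EReal.coe_add_top, add_sub_cancel, top_le_iff] at h
  exact hx₀ h

lemma subdiff_fconj (hbot : ∀ x, f x ≠ ⊥) {x y : Euc d} (hy : y ∈ subdiff f x)
    (hfx : f x = ((f x).toReal : ℝ)) :
    fconj f y = ((⟪x, y⟫ - (f x).toReal : ℝ) : EReal) := by
  apply le_antisymm
  · apply iSup_le
    intro z'
    have hz := hy (z' - x)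
    rw [add_sub_cancel] at hz
    by_cases hz' : f z' = ⊤
    · rw [hz', EReal.sub_top]; exact bot_le
    have h2 := EReal.coe_toReal hz' (hbot z')
    rw [← h2, ← EReal.coe_sub, EReal.coe_le_coe_iff]
    rw [hfx, ← h2, ← EReal.coe_add, EReal.coe_le_coe_iff, inner_sub_left] at hz
    linarith
  · have h := le_iSup (fun z => ((⟪z, y⟫ : ℝ) : EReal) - f z) x
    rw [show (⨆ z, ((⟪z, y⟫ : ℝ) : EReal) - f z) = fconj f y from rfl, hfx,
      ← EReal.coe_sub] at h
    exact h

lemma exists_max (hbot : ∀ x, f x ≠ ⊥) (hx₀ : f x₀ ≠ ⊤) {C : Set (Euc d)} (hC : IsCompact C)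
    (hCdom : (C ∩ {y | fconj f y ≠ ⊤}).Nonempty) (x : Euc d) :
    ∃ yy ∈ C, restrSup f C x = ((⟪x, yy⟫ : ℝ) : EReal) - fconj f yy ∧ fconj f yy ≠ ⊤ ∧
      restrSup f C x ≠ ⊥ ∧ restrSup f C x ≠ ⊤ := by
  obtain ⟨y₀, hy₀C, hy₀⟩ := hCdom
  have hy₀b := conj_ne_bot hbot hx₀ y₀
  -- M ≠ ⊥
  have hMbot : restrSup f C x ≠ ⊥ := by
    have h : ((⟪x, y₀⟫ - (fconj f y₀).toReal : ℝ) : EReal) ≤ restrSup f C x := by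
      have := le_iSup₂ (f := fun y (_ : y ∈ C) => ((⟪x, y⟫ : ℝ) : EReal) - fconj f y) y₀ hy₀C
      rwa [← EReal.coe_toReal hy₀ hy₀b, ← EReal.coe_sub] at this
    intro hb
    rw [hb, le_bot_iff] at h
    exact EReal.coe_ne_bot _ h
  -- M ≠ ⊤
  obtain ⟨R, hR⟩ := hC.isBounded.exists_norm_le
  set c₀ := (f x₀).toReal with hc₀
  have hMtop : restrSup f C x ≤ ((‖x - x₀‖ * R + c₀ : ℝ) : EReal) := by
    apply iSup₂_le
    intro y hyC
    have hlow : ((⟪x₀, y⟫ - c₀ : ℝ) : EReal) ≤ fconj f y := by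
      have := le_iSup (fun z => ((⟪z, y⟫ : ℝ) : EReal) - f z) x₀
      rwa [show (⨆ z, ((⟪z, y⟫ : ℝ) : EReal) - f z) = fconj f y from rfl,
        ← EReal.coe_toReal hx₀ (hbot x₀), ← EReal.coe_sub] at this
    calc ((⟪x, y⟫ : ℝ) : EReal) - fconj f y
        ≤ ((⟪x, y⟫ : ℝ) : EReal) - ((⟪x₀, y⟫ - c₀ : ℝ) : EReal) :=
          EReal.sub_le_sub le_rfl hlow
      _ = ((⟪x, y⟫ - (⟪x₀, y⟫ - c₀) : ℝ) : EReal) := by norm_cast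
      _ ≤ ((‖x - x₀‖ * R + c₀ : ℝ) : EReal) := by
          rw [EReal.coe_le_coe_iff]
          have h1 : ⟪x, y⟫ - ⟪x₀, y⟫ = ⟪x - x₀, y⟫ := (inner_sub_left _ _ _).symm
          have h2 : ⟪x - x₀, y⟫ ≤ ‖x - x₀‖ * ‖y‖ := real_inner_le_norm _ _
          have h3 : ‖x - x₀‖ * ‖y‖ ≤ ‖x - x₀‖ * R :=
            mul_le_mul_of_nonneg_left (hR y hyC) (norm_nonneg _)
          linarith
  have hMtop' : restrSup f C x ≠ ⊤ := fun h => by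
    rw [h, top_le_iff] at hMtop; exact EReal.coe_ne_top _ hMtop
  set m := (restrSup f C x).toReal with hmdef
  have hm : restrSup f C x = (m : EReal) := (EReal.coe_toReal hMtop' hMbot).symm
  -- maximizing sequence
  have hseq : ∀ n : ℕ, ∃ y, ∃ _ : y ∈ C,
      ((m - 1 / (n + 1) : ℝ) : EReal) < ((⟪x, y⟫ : ℝ) : EReal) - fconj f y := by
    intro n
    have hlt : ((m - 1 / (n + 1) : ℝ) : EReal) < restrSup f C x := by
      rw [hm, EReal.coe_lt_coe_iff]
      have : (0 : ℝ) < 1 / (n + 1) := by positivity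
      linarith
    obtain ⟨y, hy⟩ := lt_iSup_iff.1 hlt
    obtain ⟨hyC, hy'⟩ := lt_iSup_iff.1 hy
    exact ⟨y, hyC, hy'⟩
  choose ys hysC hys using hseq
  obtain ⟨yy, hyyC, φ, hφ, hconv⟩ := hC.tendsto_subseq hysC
  have hge : restrSup f C x ≤ ((⟪x, yy⟫ : ℝ) : EReal) - fconj f yy := by
    by_contra hlt
    push_neg at hlt
    set a := (⟪x, yy⟫ : ℝ) with ha
    have h1 : ((a - m : ℝ) : EReal) < fconj f yy := by
      by_cases hT : fconj f yy = ⊤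
      · rw [hT]; exact EReal.coe_lt_top _
      have hbb := EReal.coe_toReal hT (conj_ne_bot hbot hx₀ yy)
      rw [hm, ← hbb, ← EReal.coe_sub, EReal.coe_lt_coe_iff] at hlt
      rw [← hbb, EReal.coe_lt_coe_iff]
      linarith
    obtain ⟨b, hb1, hb2⟩ := EReal.exists_between_coe_real h1
    have hb1' : a - m < b := EReal.coe_lt_coe_iff.1 hb1
    set ε := (m - (a - b)) / 2 with hε
    have hεpos : 0 < ε := by rw [hε]; linarith
    have hev1 : ∀ᶠ z in 𝓝 yy, (b : EReal) < fconj f z := fconj_lsc hbot yy (b : EReal) hb2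
    have hev2 : ∀ᶠ z : Euc d in 𝓝 yy, ⟪x, z⟫ < a + ε := by
      have hcont : Tendsto (fun z : Euc d => (⟪x, z⟫ : ℝ)) (𝓝 yy) (𝓝 a) :=
        ((continuous_const.inner continuous_id).tendsto yy)
      exact hcont.eventually_lt_const (by linarith)
    have hev := hconv.eventually (hev1.and hev2)
    rw [eventually_atTop] at hev
    obtain ⟨N, hN⟩ := hev
    obtain ⟨n₀, hn₀⟩ := exists_nat_one_div_lt hεpos
    set k := φ (max N n₀) with hk
    obtain ⟨hbk, hak⟩ := hN (max N n₀) (le_max_left _ _)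
    have hkk : (n₀ : ℝ) ≤ (k : ℝ) := by
      have : n₀ ≤ k := le_trans (le_max_right N n₀) (hφ.le_apply)
      exact_mod_cast this
    have hdiv : 1 / ((k : ℝ) + 1) ≤ 1 / ((n₀ : ℝ) + 1) :=
      one_div_le_one_div_of_le (by positivity) (by linarith)
    -- upper bound on the k-th term
    have hup : ((⟪x, ys k⟫ : ℝ) : EReal) - fconj f (ys k)
        ≤ ((⟪x, ys k⟫ - b : ℝ) : EReal) := by
      rw [EReal.coe_sub]
      exact EReal.sub_le_sub le_rfl hbk.le
    have hlo := hys k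
    have hchain : ((m - 1 / (k + 1) : ℝ) : EReal) < ((⟪x, ys k⟫ - b : ℝ) : EReal) :=
      lt_of_lt_of_le hlo hup
    rw [EReal.coe_lt_coe_iff] at hchain
    have hak' : ⟪x, ys k⟫ < a + ε := hak
    have : (1 : ℝ) / (n₀ + 1) < ε := hn₀
    -- m - 1/(k+1) < ⟪x, ys k⟫ - b < a + ε - b = m - ε
    have haux : a + ε - b = m - ε := by rw [hε]; ring
    linarith
  have hle : ((⟪x, yy⟫ : ℝ) : EReal) - fconj f yy ≤ restrSup f C x :=
    le_iSup₂ (f := fun y (_ : y ∈ C) => ((⟪x, y⟫ : ℝ) : EReal) - fconj f y) yy hyyC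
  have heq := le_antisymm hle hge
  refine ⟨yy, hyyC, heq.symm, ?_, hMbot, hMtop'⟩
  intro hT
  rw [← heq, hT, EReal.sub_top] at hMbot
  exact hMbot rfl

lemma restr_term_le {C : Set (Euc d)} {y : Euc d} (hyC : y ∈ C) (x : Euc d) :
    ((⟪x, y⟫ : ℝ) : EReal) - fconj f y ≤ restrSup f C x :=
  le_iSup₂ (f := fun y (_ : y ∈ C) => ((⟪x, y⟫ : ℝ) : EReal) - fconj f y) y hyC

lemma mem_subdiff_of_max (hbot : ∀ x, f x ≠ ⊥) (hx₀ : f x₀ ≠ ⊤) {C : Set (Euc d)}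
    {x yy : Euc d} (hyyC : yy ∈ C)
    (heq : restrSup f C x = ((⟪x, yy⟫ : ℝ) : EReal) - fconj f yy)
    (hT : fconj f yy ≠ ⊤) : yy ∈ subdiff (restrSup f C) x := by
  intro z
  have hb := conj_ne_bot hbot hx₀ yy
  set s := (fconj f yy).toReal with hs
  have hcs : fconj f yy = (s : EReal) := (EReal.coe_toReal hT hb).symm
  have h := restr_term_le (f := f) hyyC (x + z)
  rw [hcs, ← EReal.coe_sub] at h
  rw [heq, hcs, ← EReal.coe_sub, ← EReal.coe_add]
  refine le_trans (le_of_eq ?_) h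
  rw [EReal.coe_eq_coe_iff, inner_add_left]
  ring

end Helpers

/-- Lemma 2 of the paper, third part. -/
theorem stmt4 {d : ℕ} (f : Euc d → EReal) (hf : ClosedConvexFun f)
    (C : Set (Euc d)) (hC : IsCompact C)
    (hCdom : (C ∩ {y | fconj f y ≠ ⊤}).Nonempty) (x : Euc d) :
    ((subdiff f x ∩ C).Nonempty ↔ f x = restrSup f C x) ∧
    ((subdiff f x ∩ C).Nonempty ↔
      subdiff f x ∩ C = subdiff (restrSup f C) x ∩ C) := by
  obtain ⟨_, hbot, ⟨x₀, hx₀⟩, _⟩ := hf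
  obtain ⟨yy, hyyC, hyy, hyyT, hMb, hMt⟩ := exists_max hbot hx₀ hC hCdom x
  -- (i) → (ii)
  have h12 : (subdiff f x ∩ C).Nonempty → f x = restrSup f C x := by
    rintro ⟨y, hyf, hyC⟩
    have hfxT : f x ≠ ⊤ := subdiff_ne_top hx₀ hyf
    have hfx : f x = ((f x).toReal : EReal) := (EReal.coe_toReal hfxT (hbot x)).symm
    have hfc := subdiff_fconj hbot hyf hfx
    refine le_antisymm ?_ (restr_le hbot hx₀ C x)
    have h := restr_term_le (f := f) hyC x
    rw [hfc, ← EReal.coe_sub] at h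
    rw [hfx]
    refine le_trans (le_of_eq ?_) h
    rw [EReal.coe_eq_coe_iff]
    ring
  -- (ii) → (i)
  have h21 : f x = restrSup f C x → (subdiff f x ∩ C).Nonempty := by
    intro hfM
    refine ⟨yy, ?_, hyyC⟩
    intro z
    have hb := conj_ne_bot hbot hx₀ yy
    set s := (fconj f yy).toReal with hs
    have hcs : fconj f yy = (s : EReal) := (EReal.coe_toReal hyyT hb).symm
    have h := term_le hbot hx₀ (x + z) yy
    rw [hcs, ← EReal.coe_sub] at h
    rw [hfM, hyy, hcs, ← EReal.coe_sub, ← EReal.coe_add]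
    refine le_trans (le_of_eq ?_) h
    rw [EReal.coe_eq_coe_iff, inner_add_left]
    ring
  refine ⟨⟨h12, h21⟩, ?_, ?_⟩
  · -- (i) → (iii)
    intro hne
    have hfM := h12 hne
    have hfxT : f x ≠ ⊤ := fun h => hMt (hfM.symm.trans h)
    have hfx : f x = ((f x).toReal : EReal) := (EReal.coe_toReal hfxT (hbot x)).symm
    ext y
    simp only [Set.mem_inter_iff]
    constructor
    · rintro ⟨hyf, hyC⟩
      refine ⟨?_, hyC⟩
      intro z
      have hfc := subdiff_fconj hbot hyf hfx
      have h := restr_term_le (f := f) hyC (x + z)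
      rw [hfc, ← EReal.coe_sub] at h
      rw [← hfM, hfx, ← EReal.coe_add]
      refine le_trans (le_of_eq ?_) h
      rw [EReal.coe_eq_coe_iff, inner_add_left]
      ring
    · rintro ⟨hyr, hyC⟩
      refine ⟨?_, hyC⟩
      intro z
      calc ((⟪z, y⟫ : ℝ) : EReal) + f x = ((⟪z, y⟫ : ℝ) : EReal) + restrSup f C x := by
            rw [hfM]
        _ ≤ restrSup f C (x + z) := hyr z
        _ ≤ f (x + z) := restr_le hbot hx₀ C (x + z)
  · -- (iii) → (i)
    intro hset
    have : yy ∈ subdiff (restrSup f C) x ∩ C :=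
      ⟨mem_subdiff_of_max hbot hx₀ hyyC hyy hyyT, hyyC⟩
    exact ⟨yy, hset ▸ this⟩


end
end

section
/- Let f : ℝ^d → ℝ ∪ {+∞} be a closed convex function with D := int(dom f) ≠ ∅, and let A be a closed set in ℝ^d. Then f_A(x) = f(x) for all x in the closure of D if and only if range ∇f ⊂ A, where range ∇f := {∇f(x) : x ∈ D, f differentiable at x}. In other words, F := cl(range ∇f) is the minimal closed set A such that f_A = f on cl D. -/
open Filter Topology Set Pointwise
open scoped RealInnerProductSpace

noncomputable section

open Metric MeasureTheory

namespace Stmt6Aux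

variable {d : ℕ} {f : Euc d → EReal}

lemma f_eq_coe (hf : ClosedConvexFun f) {x : Euc d} (hx : x ∈ effDom f) :
    f x = ((toRealFun f x : ℝ) : EReal) :=
  (EReal.coe_toReal hx (hf.2.1 x)).symm

lemma convexOn_toReal (hf : ClosedConvexFun f) : ConvexOn ℝ (effDom f) (toRealFun f) := by
  have key : ∀ x ∈ effDom f, ∀ y ∈ effDom f, ∀ a b : ℝ, 0 ≤ a → 0 ≤ b → a + b = 1 →
      f (a • x + b • y) ≤ ((a * toRealFun f x + b * toRealFun f y : ℝ) : EReal) := by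
    intro x hx y hy a b ha hb hab
    have h := hf.2.2.2 x y a b ha hb hab
    rwa [f_eq_coe hf hx, f_eq_coe hf hy, ← EReal.coe_mul, ← EReal.coe_mul, ← EReal.coe_add] at h
  refine ⟨fun x hx y hy a b ha hb hab => ?_, fun x hx y hy a b ha hb hab => ?_⟩
  · exact ne_top_of_le_ne_top (EReal.coe_ne_top _) (key x hx y hy a b ha hb hab)
  · have h := key x hx y hy a b ha hb hab
    have h2 := EReal.toReal_le_toReal h (hf.2.1 _) (EReal.coe_ne_top _)
    rwa [EReal.toReal_coe] at h2

lemma term_le_fconj (f : Euc d → EReal) (x y : Euc d) :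
    ((⟪x, y⟫ : ℝ) : EReal) - f x ≤ fconj f y :=
  le_iSup (fun z => ((⟪z, y⟫ : ℝ) : EReal) - f z) x

lemma fconj_ne_bot (hf : ClosedConvexFun f) (y : Euc d) : fconj f y ≠ ⊥ := by
  obtain ⟨x, hx⟩ := hf.2.2.1
  have h := term_le_fconj f x y
  rw [f_eq_coe hf hx, ← EReal.coe_sub] at h
  intro hb
  rw [hb, le_bot_iff] at h
  exact EReal.coe_ne_bot _ h

lemma fenchel_young (hf : ClosedConvexFun f) (A : Set (Euc d)) (x : Euc d) :
    restrSup f A x ≤ f x := by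
  refine iSup₂_le fun y _ => ?_
  rcases eq_or_ne (f x) ⊤ with h | h
  · rw [h]; exact le_top
  have hco := term_le_fconj f x y
  rw [f_eq_coe hf h] at hco ⊢
  set c := toRealFun f x
  rcases eq_or_ne (fconj f y) ⊤ with h2 | h2
  · rw [h2, EReal.sub_top]; exact bot_le
  have hb : fconj f y ≠ ⊥ := fconj_ne_bot hf y
  set t := (fconj f y).toReal with ht
  have htt : fconj f y = (t : EReal) := (EReal.coe_toReal h2 hb).symm
  rw [htt, ← EReal.coe_sub, EReal.coe_le_coe_iff] at hco ⊢
  linarith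

lemma fconj_lsc (f : Euc d → EReal) : LowerSemicontinuous (fconj f) := by
  apply lowerSemicontinuous_iSup
  intro x
  rcases eq_or_ne (f x) ⊤ with h | h
  · have he : (fun y : Euc d => ((⟪x, y⟫ : ℝ) : EReal) - f x) = fun _ => (⊥ : EReal) := by
      funext y; rw [h, EReal.sub_top]
    rw [he]; exact lowerSemicontinuous_const
  rcases eq_or_ne (f x) ⊥ with h2 | h2
  · have he : (fun y : Euc d => ((⟪x, y⟫ : ℝ) : EReal) - f x) = fun _ => (⊤ : EReal) := by
      funext y; rw [h2, EReal.coe_sub_bot]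
    rw [he]; exact lowerSemicontinuous_const
  · set c := (f x).toReal with hc
    have hcc : f x = (c : EReal) := (EReal.coe_toReal h h2).symm
    have he : (fun y : Euc d => ((⟪x, y⟫ : ℝ) : EReal) - f x)
        = fun y : Euc d => ((⟪x, y⟫ - c : ℝ) : EReal) := by
      funext y; rw [hcc, ← EReal.coe_sub]
    rw [he]
    apply Continuous.lowerSemicontinuous
    exact continuous_coe_real_ereal.comp ((continuous_const.inner continuous_id).sub continuous_const)

/-- Subgradient predicate. -/
def IsSubgrad (f : Euc d → EReal) (x v : Euc d) : Prop :=
  ∀ z, f x + ((⟪v, z - x⟫ : ℝ) : EReal) ≤ f z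

lemma line_hasDerivAt (φ : Euc d → ℝ) {x : Euc d} (hφ : DifferentiableAt ℝ φ x) (u : Euc d) :
    HasDerivAt (fun t : ℝ => φ (x + t • u)) ⟪gradient φ x, u⟫ 0 := by
  have h1 : HasDerivAt (fun t : ℝ => x + t • u) u 0 := by
    simpa using ((hasDerivAt_id (0 : ℝ)).smul_const u).const_add x
  have h2 : HasFDerivAt φ (InnerProductSpace.toDual ℝ (Euc d) (gradient φ x)) x :=
    hφ.hasGradientAt.hasFDerivAt
  have h3 : HasFDerivAt φ (InnerProductSpace.toDual ℝ (Euc d) (gradient φ x))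
      (x + (0 : ℝ) • u) := by simpa using h2
  have h4 := h3.comp_hasDerivAt 0 h1
  have h5 : HasDerivAt (fun t : ℝ => φ (x + t • u))
      (InnerProductSpace.toDual ℝ (Euc d) (gradient φ x) u) 0 := h4
  simpa [InnerProductSpace.toDual_apply_apply] using h5


lemma grad_isSubgrad (hf : ClosedConvexFun f) {x : Euc d} (hx : x ∈ domGrad f) :
    IsSubgrad f x (gradient (toRealFun f) x) := by
  obtain ⟨hxD, hdiff⟩ := hx
  set φ := toRealFun f with hφdef
  intro z
  rcases eq_or_ne (f z) ⊤ with hz | hz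
  · rw [hz]; exact le_top
  have hxE : x ∈ effDom f := interior_subset hxD
  have hzE : z ∈ effDom f := hz
  have key : ⟪gradient φ x, z - x⟫ ≤ φ z - φ x := by
    set ψ : ℝ → ℝ := fun t => φ (x + t • (z - x)) with hψ
    have hψ0 : ψ 0 = φ x := by simp [hψ]
    have hconv : ∀ t : ℝ, 0 ≤ t → t ≤ 1 → ψ t ≤ (1 - t) * φ x + t * φ z := by
      intro t ht0 ht1
      have hmem := (convexOn_toReal hf).2 hxE hzE (by linarith : (0:ℝ) ≤ 1 - t) ht0 (by ring)
      have harg : x + t • (z - x) = (1 - t) • x + t • z := by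
        rw [smul_sub, sub_smul, one_smul]; abel
      rw [hψ]
      dsimp only
      rw [harg]
      exact hmem
    have hder := line_hasDerivAt φ hdiff (z - x)
    have hslope := hasDerivAt_iff_tendsto_slope.mp hder
    have hs2 : Filter.Tendsto (slope ψ 0) (𝓝[>] 0) (𝓝 ⟪gradient φ x, z - x⟫) :=
      hslope.mono_left (nhdsWithin_mono _ (fun t ht => ne_of_gt ht))
    refine le_of_tendsto hs2 ?_
    filter_upwards [Ioo_mem_nhdsGT_of_mem (by norm_num : (0:ℝ) ∈ Ico (0:ℝ) 1)] with t ht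
    have h1 := hconv t ht.1.le ht.2.le
    have hsl : slope ψ 0 t = (ψ t - ψ 0) / t := by
      rw [slope_def_field]; ring_nf
    rw [hsl, hψ0, div_le_iff₀ ht.1]
    nlinarith [ht.1, ht.2]
  rw [f_eq_coe hf hxE, f_eq_coe hf hzE, ← EReal.coe_add, EReal.coe_le_coe_iff]
  linarith

lemma subgrad_unique (hf : ClosedConvexFun f) {x w : Euc d} (hx : x ∈ domGrad f)
    (hw : IsSubgrad f x w) : w = gradient (toRealFun f) x := by
  set φ := toRealFun f with hφdef
  set v := gradient φ x with hvdef
  have key : ∀ u : Euc d, ⟪w, u⟫ ≤ ⟪v, u⟫ := by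
    intro u
    set ψ : ℝ → ℝ := fun t => φ (x + t • u) with hψ
    have hψ0 : ψ 0 = φ x := by simp [hψ]
    have hder := line_hasDerivAt φ hx.2 u
    have hslope := hasDerivAt_iff_tendsto_slope.mp hder
    have hs2 : Filter.Tendsto (slope ψ 0) (𝓝[>] 0) (𝓝 ⟪v, u⟫) :=
      hslope.mono_left (nhdsWithin_mono _ (fun t ht => ne_of_gt ht))
    refine ge_of_tendsto hs2 ?_
    have hcont : Filter.Tendsto (fun t : ℝ => x + t • u) (𝓝[>] 0) (𝓝 x) := by
      have h1 : Filter.Tendsto (fun t : ℝ => x + t • u) (𝓝 0) (𝓝 (x + (0:ℝ) • u)) :=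
        (tendsto_const_nhds.add ((continuous_id.smul continuous_const).tendsto 0))
      simpa using h1.mono_left nhdsWithin_le_nhds
    have hev : ∀ᶠ t in 𝓝[>] (0:ℝ), x + t • u ∈ interior (effDom f) :=
      hcont (isOpen_interior.mem_nhds hx.1)
    filter_upwards [hev, self_mem_nhdsWithin] with t htD ht
    have h2 := hw (x + t • u)
    rw [f_eq_coe hf (interior_subset hx.1), f_eq_coe hf (interior_subset htD),
      ← EReal.coe_add, EReal.coe_le_coe_iff] at h2
    have hin : ⟪w, x + t • u - x⟫ = t * ⟪w, u⟫ := by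
      rw [add_sub_cancel_left, real_inner_smul_right]
    rw [hin] at h2
    have hsl : slope ψ 0 t = (ψ t - ψ 0) / t := by rw [slope_def_field]; ring_nf
    rw [hsl, hψ0, le_div_iff₀ ht]
    have : ψ t = φ (x + t • u) := rfl
    nlinarith [h2]
  have h2 : ∀ u : Euc d, ⟪w - v, u⟫ ≤ 0 := by
    intro u
    have := key u
    rw [inner_sub_left]
    linarith
  have h3 : ⟪w - v, w - v⟫ = 0 :=
    le_antisymm (h2 (w - v)) real_inner_self_nonneg
  have h4 : w - v = 0 := inner_self_eq_zero.mp h3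
  rw [sub_eq_zero] at h4
  exact h4

lemma fenchel_eq (hf : ClosedConvexFun f) {x v : Euc d} (hxE : x ∈ effDom f)
    (hv : IsSubgrad f x v) :
    fconj f v = ((⟪x, v⟫ - toRealFun f x : ℝ) : EReal) := by
  apply le_antisymm
  · refine iSup_le fun z => ?_
    rcases eq_or_ne (f z) ⊤ with hz | hz
    · rw [hz, EReal.sub_top]; exact bot_le
    · have h2 := hv z
      rw [f_eq_coe hf hxE, f_eq_coe hf hz, ← EReal.coe_add, EReal.coe_le_coe_iff] at h2
      rw [f_eq_coe hf hz, ← EReal.coe_sub, EReal.coe_le_coe_iff]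
      have hvz : ⟪v, z - x⟫ = ⟪z, v⟫ - ⟪x, v⟫ := by
        rw [inner_sub_right, real_inner_comm v z, real_inner_comm v x]
      linarith
  · have h := term_le_fconj f x v
    rwa [f_eq_coe hf hxE, ← EReal.coe_sub] at h


lemma exists_lip (hf : ClosedConvexFun f) {x : Euc d} (hx : x ∈ interior (effDom f)) :
    ∃ r > 0, ∃ K : NNReal, ball x r ⊆ interior (effDom f) ∧
      LipschitzOnWith K (toRealFun f) (ball x r) := by
  have hconvD : Convex ℝ (interior (effDom f)) := (convexOn_toReal hf).1.interior
  have hLL : LocallyLipschitzOn (interior (effDom f)) (toRealFun f) :=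
    ((convexOn_toReal hf).subset interior_subset hconvD).locallyLipschitzOn isOpen_interior
  obtain ⟨K, t, ht, hK⟩ := hLL hx
  rw [isOpen_interior.nhdsWithin_eq hx] at ht
  obtain ⟨ε₁, hε₁, hball₁⟩ := Metric.mem_nhds_iff.mp ht
  obtain ⟨ε₂, hε₂, hball₂⟩ := Metric.mem_nhds_iff.mp (isOpen_interior.mem_nhds hx)
  refine ⟨min ε₁ ε₂, lt_min hε₁ hε₂, K,
    (ball_subset_ball (min_le_right _ _)).trans hball₂,
    hK.mono ((ball_subset_ball (min_le_left _ _)).trans hball₁)⟩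

lemma norm_gradient_le {φ : Euc d → ℝ} {z x : Euc d} {r : ℝ} {K : NNReal}
    (hz : z ∈ ball x r) (hK : LipschitzOnWith K φ (ball x r)) :
    ‖gradient φ z‖ ≤ K := by
  have h1 : ‖fderiv ℝ φ z‖ ≤ K :=
    norm_fderiv_le_of_lipschitzOn ℝ (isOpen_ball.mem_nhds hz) hK
  have h2 : ‖gradient φ z‖ = ‖fderiv ℝ φ z‖ := by
    rw [gradient]
    exact LinearIsometryEquiv.norm_map _ _
  rw [h2]
  exact h1

lemma exists_grad_near (hf : ClosedConvexFun f) {x : Euc d}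
    (hx : x ∈ interior (effDom f)) {ε : ℝ} (hε : 0 < ε) :
    ∃ z ∈ domGrad f, dist z x < ε := by
  obtain ⟨r, hr, K, hball, hK⟩ := exists_lip hf hx
  set ρ := min r ε with hρdef
  have hρ : 0 < ρ := lt_min hr hε
  have hlip' : LipschitzOnWith K (toRealFun f) (ball x ρ) :=
    hK.mono (ball_subset_ball (min_le_left _ _))
  have hae := hlip'.ae_differentiableWithinAt_of_mem (μ := volume)
  have hpos : 0 < volume (ball x ρ) := measure_ball_pos volume x hρ
  obtain ⟨z, hz1, hz2⟩ : ∃ z, z ∈ ball x ρ ∧ DifferentiableWithinAt ℝ (toRealFun f) (ball x ρ) z := by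
    by_contra h
    push_neg at h
    have hzero : ∀ᵐ z ∂(volume : Measure (Euc d)), z ∉ ball x ρ :=
      hae.mono fun z hz hzb => h z hzb (hz hzb)
    rw [← MeasureTheory.measure_eq_zero_iff_ae_notMem] at hzero
    exact hpos.ne' hzero
  have hzD : z ∈ interior (effDom f) := hball (ball_subset_ball (min_le_left _ _) hz1)
  have hzdiff : DifferentiableAt ℝ (toRealFun f) z :=
    hz2.differentiableAt (isOpen_ball.mem_nhds hz1)
  exact ⟨z, ⟨hzD, hzdiff⟩, lt_of_lt_of_le hz1 (min_le_right _ _)⟩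


lemma restrSup_eq_on_int (hf : ClosedConvexFun f) {A : Set (Euc d)} (hA : gradRange f ⊆ A)
    {x : Euc d} (hx : x ∈ interior (effDom f)) : restrSup f A x = f x := by
  refine le_antisymm (fenchel_young hf A x) ?_
  set φ := toRealFun f with hφdef
  rw [f_eq_coe hf (interior_subset hx)]
  have key : ∀ ε : ℝ, 0 < ε → ((φ x - ε : ℝ) : EReal) ≤ restrSup f A x := by
    intro ε hε
    obtain ⟨r, hr, K, hball, hK⟩ := exists_lip hf hx
    set δ : ℝ := min (r/2) (ε / (2*K+1)) with hδdef
    have hδ : 0 < δ := lt_min (by linarith) (div_pos hε (by positivity))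
    obtain ⟨z, hzG, hzd'⟩ := exists_grad_near hf hx hδ
    set v := gradient φ z with hvdef
    have hvA : v ∈ A := hA ⟨z, hzG, rfl⟩
    have hzE : z ∈ effDom f := interior_subset hzG.1
    have hfe := fenchel_eq hf hzE (grad_isSubgrad hf hzG)
    have h1 : ((⟪x, v⟫ : ℝ) : EReal) - fconj f v ≤ restrSup f A x :=
      le_iSup₂ (f := fun y (_ : y ∈ A) => ((⟪x, y⟫ : ℝ) : EReal) - fconj f y) v hvA
    rw [hfe, ← EReal.coe_sub] at h1
    refine le_trans ?_ h1
    rw [EReal.coe_le_coe_iff]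
    have hzball : z ∈ ball x r := by
      rw [mem_ball]
      calc dist z x < δ := hzd'
      _ ≤ r/2 := min_le_left _ _
      _ < r := by linarith
    have hxball : x ∈ ball x r := mem_ball_self hr
    have hφb : |φ z - φ x| ≤ (K : ℝ) * dist z x := by
      have := hK.dist_le_mul z hzball x hxball
      rwa [Real.dist_eq] at this
    have hv : ‖v‖ ≤ (K : ℝ) := norm_gradient_le hzball hK
    have hinner : |⟪x - z, v⟫| ≤ dist z x * K := by
      calc |⟪x - z, v⟫| ≤ ‖x - z‖ * ‖v‖ := abs_real_inner_le_norm _ _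
      _ ≤ dist z x * K := by
          rw [← norm_sub_rev, ← dist_eq_norm]
          exact mul_le_mul_of_nonneg_left hv dist_nonneg
    have hre : ⟪x, v⟫ - (⟪z, v⟫ - φ z) = φ z + ⟪x - z, v⟫ := by
      rw [inner_sub_left]; ring
    rw [hre]
    have hd : dist z x ≤ δ := le_of_lt hzd'
    have hδ2 : δ * (2*K+1) ≤ ε := by
      have h3 : δ ≤ ε / (2*K+1) := min_le_right _ _
      calc δ * (2*K+1) ≤ (ε / (2*K+1)) * (2*K+1) :=
        mul_le_mul_of_nonneg_right h3 (by positivity)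
      _ = ε := by field_simp
    have hKd : (0:ℝ) ≤ K := K.2
    have hdn : (0:ℝ) ≤ dist z x := dist_nonneg
    have ha1 := abs_le.mp hφb
    have ha2 := abs_le.mp hinner
    nlinarith
  by_contra hlt
  push_neg at hlt
  have hne : restrSup f A x ≠ ⊤ := fun h => by rw [h] at hlt; exact (lt_irrefl _ (hlt.trans_le le_top))
  have hnb : restrSup f A x ≠ ⊥ := by
    intro h
    have := key 1 one_pos
    rw [h, le_bot_iff] at this
    exact EReal.coe_ne_bot _ this
  set t := (restrSup f A x).toReal with htdef
  have htt : restrSup f A x = (t : EReal) := (EReal.coe_toReal hne hnb).symm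
  rw [htt, EReal.coe_lt_coe_iff] at hlt
  have h4 := key ((φ x - t)/2) (by linarith)
  rw [htt, EReal.coe_le_coe_iff] at h4
  linarith


lemma restrSup_eq_on_closure (hf : ClosedConvexFun f)
    (hD : (interior (effDom f)).Nonempty) {A : Set (Euc d)} (hA : gradRange f ⊆ A)
    {x : Euc d} (hx : x ∈ closure (interior (effDom f))) : restrSup f A x = f x := by
  refine le_antisymm (fenchel_young hf A x) ?_
  obtain ⟨x₀, hx₀⟩ := hD
  set φ := toRealFun f with hφdef
  set g := restrSup f A with hgdef
  -- g x is not ⊥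
  obtain ⟨z₀, hz₀G, _⟩ := exists_grad_near hf hx₀ one_pos
  set v₀ := gradient φ z₀ with hv₀def
  have hfe₀ := fenchel_eq hf (interior_subset hz₀G.1) (grad_isSubgrad hf hz₀G)
  have hbot : ((⟪x, v₀⟫ - (⟪z₀, v₀⟫ - φ z₀) : ℝ) : EReal) ≤ g x := by
    have h := le_iSup₂ (f := fun y (_ : y ∈ A) => ((⟪x, y⟫ : ℝ) : EReal) - fconj f y)
      v₀ (hA ⟨z₀, hz₀G, rfl⟩)
    rwa [hfe₀, ← EReal.coe_sub] at h
  rcases eq_or_ne (g x) ⊤ with htop | htop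
  · rw [htop]; exact le_top
  have hgbot : g x ≠ ⊥ := by
    intro h
    rw [h, le_bot_iff] at hbot
    exact EReal.coe_ne_bot _ hbot
  set G := (g x).toReal with hGdef
  have hgx : g x = (G : EReal) := (EReal.coe_toReal htop hgbot).symm
  have hconvE : Convex ℝ (effDom f) := (convexOn_toReal hf).1
  set xt : ℝ → Euc d := fun t => (1 - t) • x₀ + t • x with hxtdef
  have hxtmem : ∀ t : ℝ, 0 ≤ t → t < 1 → xt t ∈ interior (effDom f) := by
    intro t ht0 ht1
    exact hconvE.combo_interior_closure_mem_interior hx₀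
      ((closure_mono interior_subset) hx) (by linarith) ht0 (by ring)
  have hgx₀ : g x₀ = ((φ x₀ : ℝ) : EReal) := by
    rw [hgdef, restrSup_eq_on_int hf hA hx₀]
    exact f_eq_coe hf (interior_subset hx₀)
  have hcomb : ∀ t : ℝ, 0 ≤ t → t < 1 → φ (xt t) ≤ (1 - t) * φ x₀ + t * G := by
    intro t ht0 ht1
    have hxt : xt t ∈ interior (effDom f) := hxtmem t ht0 ht1
    have hgt : g (xt t) = ((φ (xt t) : ℝ) : EReal) := by
      rw [hgdef, restrSup_eq_on_int hf hA hxt]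
      exact f_eq_coe hf (interior_subset hxt)
    have hub : g (xt t) ≤ (((1 - t) * φ x₀ + t * G : ℝ) : EReal) := by
      refine iSup₂_le fun y hy => ?_
      rcases eq_or_ne (fconj f y) ⊤ with hc | hc
      · rw [hc, EReal.sub_top]; exact bot_le
      have hcb : fconj f y ≠ ⊥ := fconj_ne_bot hf y
      set c := (fconj f y).toReal with hcdef
      have hcc : fconj f y = (c : EReal) := (EReal.coe_toReal hc hcb).symm
      have h₀ : ⟪x₀, y⟫ - c ≤ φ x₀ := by
        have h : ((⟪x₀, y⟫ : ℝ) : EReal) - fconj f y ≤ g x₀ :=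
          le_iSup₂ (f := fun y (_ : y ∈ A) => ((⟪x₀, y⟫ : ℝ) : EReal) - fconj f y) y hy
        rw [hgx₀, hcc, ← EReal.coe_sub, EReal.coe_le_coe_iff] at h
        exact h
      have h₁ : ⟪x, y⟫ - c ≤ G := by
        have h : ((⟪x, y⟫ : ℝ) : EReal) - fconj f y ≤ g x :=
          le_iSup₂ (f := fun y (_ : y ∈ A) => ((⟪x, y⟫ : ℝ) : EReal) - fconj f y) y hy
        rw [hgx, hcc, ← EReal.coe_sub, EReal.coe_le_coe_iff] at h
        exact h
      have hexp : ⟪xt t, y⟫ = (1 - t) * ⟪x₀, y⟫ + t * ⟪x, y⟫ := by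
        rw [hxtdef]
        simp only
        rw [inner_add_left, real_inner_smul_left, real_inner_smul_left]
      rw [hcc, ← EReal.coe_sub, EReal.coe_le_coe_iff, hexp]
      nlinarith
    rw [hgt, EReal.coe_le_coe_iff] at hub
    exact hub
  rw [hgx]
  by_contra hlt
  push_neg at hlt
  obtain ⟨c, hc1, hc2⟩ := EReal.lt_iff_exists_real_btwn.mp hlt
  have hG_lt_c : G < c := EReal.coe_lt_coe_iff.mp hc1
  have hlsc := hf.1 x (c : EReal) hc2
  have hcontt : Filter.Tendsto xt (𝓝[<] (1:ℝ)) (𝓝 x) := by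
    have h1 : Continuous xt := by
      apply Continuous.add
      · exact (continuous_const.sub continuous_id).smul continuous_const
      · exact continuous_id.smul continuous_const
    have h2 : xt 1 = x := by simp [hxtdef]
    have h3 : Filter.Tendsto xt (𝓝[<] (1:ℝ)) (𝓝 (xt 1)) :=
      Filter.Tendsto.mono_left (h1.tendsto 1) nhdsWithin_le_nhds
    rwa [h2] at h3
  have hev1 : ∀ᶠ t in 𝓝[<] (1:ℝ), (c : EReal) < f (xt t) := hcontt.eventually hlsc
  have hev2 : ∀ᶠ t in 𝓝[<] (1:ℝ), (1 - t) * φ x₀ + t * G < c := by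
    have hT : Filter.Tendsto (fun t : ℝ => (1 - t) * φ x₀ + t * G) (𝓝[<] (1:ℝ)) (𝓝 G) := by
      have h1 : Filter.Tendsto (fun t : ℝ => (1 - t) * φ x₀ + t * G) (𝓝 1)
          (𝓝 ((1 - 1) * φ x₀ + 1 * G)) := by
        apply Filter.Tendsto.add
        · exact ((tendsto_const_nhds.sub tendsto_id).mul tendsto_const_nhds)
        · exact tendsto_id.mul tendsto_const_nhds
      have h2 : (1 - (1:ℝ)) * φ x₀ + 1 * G = G := by ring
      rw [h2] at h1
      exact h1.mono_left nhdsWithin_le_nhds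
    exact hT.eventually_lt_const hG_lt_c
  have hev3 : ∀ᶠ t in 𝓝[<] (1:ℝ), (0:ℝ) ≤ t ∧ t < 1 := by
    filter_upwards [Ioo_mem_nhdsLT_of_mem (by norm_num : (1:ℝ) ∈ Ioc (0:ℝ) 1),
      self_mem_nhdsWithin] with t ht1 ht2
    exact ⟨ht1.1.le, ht2⟩
  obtain ⟨t, ht1, ht2, ht3⟩ := (hev1.and (hev2.and hev3)).exists
  obtain ⟨ht0, ht1'⟩ := ht3
  have hxtE := hxtmem t ht0 ht1'
  have hfxt : f (xt t) = ((φ (xt t) : ℝ) : EReal) := f_eq_coe hf (interior_subset hxtE)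
  rw [hfxt, EReal.coe_lt_coe_iff] at ht1
  have hcb := hcomb t ht0 ht1'
  linarith


lemma grad_subset (hf : ClosedConvexFun f) {A : Set (Euc d)} (hA : IsClosed A)
    (hyp : ∀ x ∈ closure (interior (effDom f)), restrSup f A x = f x) :
    gradRange f ⊆ A := by
  rintro v ⟨x, hx, rfl⟩
  set φ := toRealFun f with hφdef
  have hxD := hx.1
  have hxE : x ∈ effDom f := interior_subset hxD
  set r := φ x with hrdef
  have hgx : restrSup f A x = ((r : ℝ) : EReal) := by
    rw [hyp x (subset_closure hxD)]
    exact f_eq_coe hf hxE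
  obtain ⟨r₀, hr₀, K, hball, hK⟩ := exists_lip hf hxD
  set ρ : ℝ := r₀ / 2 with hρdef
  have hρ : 0 < ρ := by positivity
  -- coercivity
  have hcoer : ∀ y : Euc d, ((⟪x, y⟫ + ρ * ‖y‖ - r - K * ρ : ℝ) : EReal) ≤ fconj f y := by
    intro y
    rcases eq_or_ne y 0 with rfl | hy
    · have hterm : ((⟪x, (0 : Euc d)⟫ - r : ℝ) : EReal) ≤ fconj f 0 := by
        have h := term_le_fconj f x 0
        rwa [f_eq_coe hf hxE, ← EReal.coe_sub] at h
      refine le_trans ?_ hterm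
      rw [EReal.coe_le_coe_iff]
      have : (0:ℝ) ≤ K * ρ := by positivity
      simp only [norm_zero, mul_zero]
      linarith
    · set u := x + (ρ / ‖y‖) • y with hudef
      have hnorm : ‖(ρ / ‖y‖) • y‖ = ρ := by
        rw [norm_smul, norm_div, Real.norm_eq_abs, abs_of_pos hρ, norm_norm]
        field_simp
      have hu : u ∈ ball x r₀ := by
        rw [mem_ball, dist_eq_norm, hudef, add_sub_cancel_left, hnorm]
        linarith
      have huE : u ∈ effDom f := interior_subset (hball hu)
      have hterm : ((⟪u, y⟫ - φ u : ℝ) : EReal) ≤ fconj f y := by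
        have h := term_le_fconj f u y
        rwa [f_eq_coe hf huE, ← EReal.coe_sub] at h
      refine le_trans ?_ hterm
      rw [EReal.coe_le_coe_iff]
      have h1 : ⟪u, y⟫ = ⟪x, y⟫ + ρ * ‖y‖ := by
        rw [hudef, inner_add_left, real_inner_smul_left, real_inner_self_eq_norm_mul_norm]
        have hy' : ‖y‖ ≠ 0 := norm_ne_zero_iff.mpr hy
        field_simp
      have h2 : φ u ≤ r + K * ρ := by
        have hd := hK.dist_le_mul u hu x (mem_ball_self hr₀)
        rw [Real.dist_eq] at hd
        have hdu : dist u x = ρ := by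
          rw [dist_eq_norm, hudef, add_sub_cancel_left, hnorm]
        rw [hdu] at hd
        have := (abs_le.mp hd).1
        linarith [(abs_le.mp hd).2]
      linarith
  -- maximizing sequence
  have hseq : ∀ n : ℕ, ∃ y, y ∈ A ∧
      ((r - 1/(n+1) : ℝ) : EReal) < ((⟪x, y⟫ : ℝ) : EReal) - fconj f y := by
    intro n
    have hlt : ((r - 1/(n+1) : ℝ) : EReal) < restrSup f A x := by
      rw [hgx, EReal.coe_lt_coe_iff]
      have : (0:ℝ) < 1/(n+1) := by positivity
      linarith
    rw [restrSup, lt_iSup_iff] at hlt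
    obtain ⟨y, hy⟩ := hlt
    rw [lt_iSup_iff] at hy
    obtain ⟨hyA, hy⟩ := hy
    exact ⟨y, hyA, hy⟩
  choose ys hysA hys using hseq
  -- each fconj finite
  have hfin : ∀ n, fconj f (ys n) ≠ ⊤ := by
    intro n
    intro h
    have := hys n
    rw [h, EReal.sub_top] at this
    exact not_lt_bot this
  set cs : ℕ → ℝ := fun n => (fconj f (ys n)).toReal with hcsdef
  have hcs : ∀ n, fconj f (ys n) = ((cs n : ℝ) : EReal) := fun n =>
    (EReal.coe_toReal (hfin n) (fconj_ne_bot hf (ys n))).symm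
  have hysreal : ∀ n, r - 1/(n+1) < ⟪x, ys n⟫ - cs n := by
    intro n
    have := hys n
    rw [hcs n, ← EReal.coe_sub, EReal.coe_lt_coe_iff] at this
    exact this
  -- boundedness
  set R : ℝ := (1 + K * ρ) / ρ with hRdef
  have hbound : ∀ n, ‖ys n‖ ≤ R := by
    intro n
    have h1 := hysreal n
    have h2 : ⟪x, ys n⟫ + ρ * ‖ys n‖ - r - K * ρ ≤ cs n := by
      have := hcoer (ys n)
      rwa [hcs n, EReal.coe_le_coe_iff] at this
    have h3 : (0:ℝ) < 1/(n+1) := by positivity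
    have h4 : (1:ℝ)/(n+1) ≤ 1 := by
      rw [div_le_one (by positivity)]
      have : (0:ℝ) ≤ n := Nat.cast_nonneg n
      linarith
    have h5 : ρ * ‖ys n‖ ≤ 1 + K * ρ := by linarith
    rw [hRdef, le_div_iff₀ hρ]
    linarith [mul_comm ρ ‖ys n‖]
  -- compactness
  obtain ⟨ystar, hystarmem, σ, hσ, hconv⟩ :=
    (isCompact_closedBall (0 : Euc d) R).tendsto_subseq
      (fun n => by simpa [mem_closedBall, dist_eq_norm] using hbound n)
  have hystarA : ystar ∈ A :=
    hA.mem_of_tendsto hconv (Filter.Eventually.of_forall fun n => hysA (σ n))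
  -- lsc upper bound on fconj at ystar
  have hupper : fconj f ystar ≤ ((⟪x, ystar⟫ - r : ℝ) : EReal) := by
    by_contra hlt
    push_neg at hlt
    obtain ⟨c, hc1, hc2⟩ := EReal.lt_iff_exists_real_btwn.mp hlt
    have hlsc := fconj_lsc f ystar (c : EReal) hc2
    have hev1 : ∀ᶠ n in Filter.atTop, (c : EReal) < fconj f (ys (σ n)) := hconv.eventually hlsc
    have hT : Filter.Tendsto (fun n => ⟪x, ys (σ n)⟫ - r + 1/((σ n : ℝ)+1)) Filter.atTop
        (𝓝 (⟪x, ystar⟫ - r)) := by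
      have hT1 : Filter.Tendsto (fun n => ⟪x, ys (σ n)⟫) Filter.atTop (𝓝 ⟪x, ystar⟫) :=
        ((continuous_const.inner continuous_id).tendsto ystar).comp hconv
      have hT2 : Filter.Tendsto (fun n : ℕ => 1/((σ n : ℝ)+1)) Filter.atTop (𝓝 0) :=
        tendsto_one_div_add_atTop_nhds_zero_nat.comp hσ.tendsto_atTop
      have h3 : Filter.Tendsto (fun n => ⟪x, ys (σ n)⟫ - r) Filter.atTop (𝓝 (⟪x, ystar⟫ - r)) :=
        hT1.sub (tendsto_const_nhds (x := r))
      have h4 := h3.add hT2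
      simpa using h4
    have hev2 : ∀ᶠ n in Filter.atTop, ⟪x, ys (σ n)⟫ - r + 1/((σ n : ℝ)+1) < c :=
      hT.eventually_lt_const (EReal.coe_lt_coe_iff.mp hc1)
    obtain ⟨n, hn1, hn2⟩ := (hev1.and hev2).exists
    have h1 := hysreal (σ n)
    rw [hcs (σ n), EReal.coe_lt_coe_iff] at hn1
    linarith
  have hlower : ((⟪x, ystar⟫ - r : ℝ) : EReal) ≤ fconj f ystar := by
    have h := term_le_fconj f x ystar
    rwa [f_eq_coe hf hxE, ← EReal.coe_sub] at h
  have heq : fconj f ystar = ((⟪x, ystar⟫ - r : ℝ) : EReal) := le_antisymm hupper hlower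
  -- ystar is a subgradient at x
  have hsub : IsSubgrad f x ystar := by
    intro z
    rcases eq_or_ne (f z) ⊤ with hz | hz
    · rw [hz]; exact le_top
    have hzE : z ∈ effDom f := hz
    have h := term_le_fconj f z ystar
    rw [heq, f_eq_coe hf hzE, ← EReal.coe_sub, EReal.coe_le_coe_iff] at h
    rw [f_eq_coe hf hxE, f_eq_coe hf hzE, ← EReal.coe_add, EReal.coe_le_coe_iff]
    have hvz : ⟪ystar, z - x⟫ = ⟪z, ystar⟫ - ⟪x, ystar⟫ := by
      rw [inner_sub_right, real_inner_comm ystar z, real_inner_comm ystar x]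
    rw [hvz]
    linarith
  have hfinal := subgrad_unique hf hx hsub
  show gradient (toRealFun f) x ∈ A
  rw [← hfinal]
  exact hystarA

end Stmt6Aux






/-- Lemma 4 of the paper. -/
theorem stmt6 {d : ℕ} (f : Euc d → EReal) (hf : ClosedConvexFun f)
    (hD : (interior (effDom f)).Nonempty)
    (A : Set (Euc d)) (hA : IsClosed A) :
    ((∀ x ∈ closure (interior (effDom f)), restrSup f A x = f x) ↔
      gradRange f ⊆ A) ∧
    (∀ x ∈ closure (interior (effDom f)),
      restrSup f (closure (gradRange f)) x = f x) ∧
    (∀ B : Set (Euc d), IsClosed B →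
      (∀ x ∈ closure (interior (effDom f)), restrSup f B x = f x) →
      closure (gradRange f) ⊆ B) := by
  refine ⟨⟨fun hyp => Stmt6Aux.grad_subset hf hA hyp,
    fun hsub x hx => Stmt6Aux.restrSup_eq_on_closure hf hD hsub hx⟩,
    fun x hx => Stmt6Aux.restrSup_eq_on_closure hf hD subset_closure hx,
    fun B hB hyp => closure_minimal (Stmt6Aux.grad_subset hf hB hyp) hB⟩

end
end

section
/- Let f : ℝ^d → ℝ ∪ {+∞} be a closed convex function with D := int(dom f) ≠ ∅, and let A be a closed set in ℝ^d such that f = f_A on cl D. Then for every x ∈ cl D one has ∂f(x) ∩ A = Arg_A(x) := argmax_{y ∈ A}(⟨x,y⟩ − f*(y)), and dom Arg_A ∩ cl D = dom ∂f = dom ∂̄f. -/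
open Filter Topology Set Pointwise
open scoped RealInnerProductSpace

noncomputable section

section Aux

variable {d : ℕ} {f : Euc d → EReal}

lemma aux_ne_bot (hf : ClosedConvexFun f) (x : Euc d) : f x ≠ ⊥ := hf.2.1 x

lemma aux_coe (hf : ClosedConvexFun f) {x : Euc d} (hx : f x ≠ ⊤) :
    f x = ((toRealFun f x : ℝ) : EReal) :=
  (EReal.coe_toReal hx (hf.2.1 x)).symm

lemma aux_convex_effDom (hf : ClosedConvexFun f) : Convex ℝ (effDom f) := by
  intro u hu w hw a b ha hb hab
  have h := hf.2.2.2 u w a b ha hb hab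
  rw [aux_coe hf hu, aux_coe hf hw, ← EReal.coe_mul, ← EReal.coe_mul, ← EReal.coe_add] at h
  intro htop
  rw [htop, top_le_iff] at h
  exact EReal.coe_ne_top _ h

lemma aux_convexOn_F (hf : ClosedConvexFun f) : ConvexOn ℝ (effDom f) (toRealFun f) := by
  refine ⟨aux_convex_effDom hf, ?_⟩
  intro u hu w hw a b ha hb hab
  have h := hf.2.2.2 u w a b ha hb hab
  have hm : a • u + b • w ∈ effDom f := aux_convex_effDom hf hu hw ha hb hab
  rw [aux_coe hf hu, aux_coe hf hw, aux_coe hf hm, ← EReal.coe_mul, ← EReal.coe_mul,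
    ← EReal.coe_add] at h
  exact EReal.coe_le_coe_iff.1 h

lemma aux_fconj_lb (f : Euc d → EReal) (x y : Euc d) :
    ((⟪x, y⟫ : ℝ) : EReal) - f x ≤ fconj f y :=
  le_iSup (fun x => ((⟪x, y⟫ : ℝ) : EReal) - f x) x

lemma aux_fconj_ne_bot (hf : ClosedConvexFun f) (y : Euc d) : fconj f y ≠ ⊥ := by
  obtain ⟨w, hw⟩ := hf.2.2.1
  have h := aux_fconj_lb f w y
  rw [aux_coe hf hw, ← EReal.coe_sub] at h
  exact fun hb => EReal.coe_ne_bot _ (le_bot_iff.1 (hb ▸ h))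

lemma aux_fx_ne_top_of_subdiff (hf : ClosedConvexFun f) {x : Euc d}
    (h : (subdiff f x).Nonempty) : f x ≠ ⊤ := by
  obtain ⟨y, hy⟩ := h
  intro htop
  obtain ⟨w, hw⟩ := hf.2.2.1
  have h2 := hy (w - x)
  rw [add_sub_cancel, htop, EReal.add_top_of_ne_bot (EReal.coe_ne_bot _)] at h2
  exact hw (top_le_iff.1 h2)

end Aux
section Aux2

variable {d : ℕ} {f : Euc d → EReal}

lemma aux_subdiff_real (hf : ClosedConvexFun f) {x y : Euc d} (hy : y ∈ subdiff f x) :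
    ∀ w : Euc d, f w ≠ ⊤ → toRealFun f x + ⟪w - x, y⟫ ≤ toRealFun f w := by
  intro w hw
  have hx : f x ≠ ⊤ := aux_fx_ne_top_of_subdiff hf ⟨y, hy⟩
  have h := hy (w - x)
  rw [add_sub_cancel, aux_coe hf hx, aux_coe hf hw, ← EReal.coe_add] at h
  have := EReal.coe_le_coe_iff.1 h
  linarith

lemma aux_subdiff_of_real (hf : ClosedConvexFun f) {x y : Euc d} (hx : f x ≠ ⊤)
    (h : ∀ w : Euc d, f w ≠ ⊤ → toRealFun f x + ⟪w - x, y⟫ ≤ toRealFun f w) :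
    y ∈ subdiff f x := by
  intro z
  by_cases hw : f (x + z) = ⊤
  · rw [hw]; exact le_top
  · have h2 := h (x + z) hw
    rw [add_sub_cancel_left] at h2
    rw [aux_coe hf hx, aux_coe hf hw, ← EReal.coe_add]
    exact EReal.coe_le_coe_iff.2 (by linarith)

lemma aux_attain_of_mem_subdiff (hf : ClosedConvexFun f) {x y : Euc d}
    (hy : y ∈ subdiff f x) :
    ((⟪x, y⟫ : ℝ) : EReal) - fconj f y = f x := by
  have hx : f x ≠ ⊤ := aux_fx_ne_top_of_subdiff hf ⟨y, hy⟩
  have hle : fconj f y ≤ ((⟪x, y⟫ - toRealFun f x : ℝ) : EReal) := by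
    refine iSup_le fun w => ?_
    by_cases hw : f w = ⊤
    · rw [hw, EReal.sub_top]; exact bot_le
    · rw [aux_coe hf hw, ← EReal.coe_sub]
      refine EReal.coe_le_coe_iff.2 ?_
      have := aux_subdiff_real hf hy w hw
      have hi : ⟪w - x, y⟫ = ⟪w, y⟫ - ⟪x, y⟫ := by rw [inner_sub_left]
      linarith [this, hi ▸ this]
  have hge : ((⟪x, y⟫ - toRealFun f x : ℝ) : EReal) ≤ fconj f y := by
    have := aux_fconj_lb f x y
    rwa [aux_coe hf hx, ← EReal.coe_sub] at this
  have heq : fconj f y = ((⟪x, y⟫ - toRealFun f x : ℝ) : EReal) := le_antisymm hle hge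
  rw [heq, ← EReal.coe_sub, aux_coe hf hx]
  norm_num

lemma aux_mem_subdiff_of_attain (hf : ClosedConvexFun f) {x y : Euc d} (hx : f x ≠ ⊤)
    (hy : ((⟪x, y⟫ : ℝ) : EReal) - fconj f y = f x) : y ∈ subdiff f x := by
  have hcne : fconj f y ≠ ⊤ := by
    intro ht
    rw [ht] at hy
    rw [EReal.sub_top] at hy
    exact hf.2.1 x hy.symm
  have hcb : fconj f y ≠ ⊥ := aux_fconj_ne_bot hf y
  set c := (fconj f y).toReal with hc
  have hcc : fconj f y = ((c : ℝ) : EReal) := (EReal.coe_toReal hcne hcb).symm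
  refine aux_subdiff_of_real hf hx fun w hw => ?_
  have h1 : ((⟪w, y⟫ : ℝ) : EReal) - f w ≤ fconj f y := aux_fconj_lb f w y
  rw [aux_coe hf hw, ← EReal.coe_sub, hcc] at h1
  have h1' := EReal.coe_le_coe_iff.1 h1
  rw [hcc, ← EReal.coe_sub, aux_coe hf hx] at hy
  have h2 := EReal.coe_eq_coe_iff.1 hy
  have hi : ⟪w - x, y⟫ = ⟪w, y⟫ - ⟪x, y⟫ := by rw [inner_sub_left]
  linarith

end Aux2
section Aux3

variable {d : ℕ} {f : Euc d → EReal}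

lemma aux_effDom_subset_closure (hf : ClosedConvexFun f)
    (hD : (interior (effDom f)).Nonempty) :
    effDom f ⊆ closure (interior (effDom f)) := by
  obtain ⟨x₀, hx₀⟩ := hD
  intro x hx
  have hmem : ∀ n : ℕ, x + (1 / (n + 1) : ℝ) • (x₀ - x) ∈ interior (effDom f) := by
    intro n
    refine (aux_convex_effDom hf).add_smul_mem_interior' (subset_closure hx) ?_ ?_
    · rwa [add_sub_cancel]
    · constructor
      · positivity
      · rw [div_le_one (by positivity)]; linarith [Nat.cast_nonneg (α := ℝ) n]
  have htend : Filter.Tendsto (fun n : ℕ => x + (1 / (n + 1) : ℝ) • (x₀ - x))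
      Filter.atTop (nhds x) := by
    have h0 : Filter.Tendsto (fun n : ℕ => (1 / (n + 1) : ℝ)) Filter.atTop (nhds 0) :=
      tendsto_one_div_add_atTop_nhds_zero_nat
    have := ((h0.smul_const (x₀ - x)).const_add x)
    simpa using this
  exact mem_closure_of_tendsto htend (Filter.Eventually.of_forall hmem)

lemma aux_value_le_restrSup (f : Euc d → EReal) (A : Set (Euc d)) {y : Euc d} (hy : y ∈ A)
    (x : Euc d) : ((⟪x, y⟫ : ℝ) : EReal) - fconj f y ≤ restrSup f A x :=
  le_iSup₂ (f := fun y (_ : y ∈ A) => ((⟪x, y⟫ : ℝ) : EReal) - fconj f y) y hy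

lemma conj1 (hf : ClosedConvexFun f) (A : Set (Euc d))
    (hfA : ∀ x ∈ closure (interior (effDom f)), restrSup f A x = f x)
    {x : Euc d} (hx : x ∈ closure (interior (effDom f))) :
    subdiff f x ∩ A = argMaxOn f A x := by
  ext y
  constructor
  · rintro ⟨hys, hyA⟩
    refine ⟨hyA, fun z hz => ?_⟩
    have h1 := aux_attain_of_mem_subdiff hf hys
    have h2 := aux_value_le_restrSup f A hz x
    rw [hfA x hx, ← h1] at h2
    exact h2
  · rintro ⟨hyA, hymax⟩
    have hsup_le : restrSup f A x ≤ ((⟪x, y⟫ : ℝ) : EReal) - fconj f y := iSup₂_le hymax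
    have hle : ((⟪x, y⟫ : ℝ) : EReal) - fconj f y ≤ restrSup f A x :=
      aux_value_le_restrSup f A hyA x
    have heq : ((⟪x, y⟫ : ℝ) : EReal) - fconj f y = f x := by
      rw [← hfA x hx]; exact le_antisymm hle hsup_le
    have hxt : f x ≠ ⊤ := by
      intro ht
      rw [ht] at heq
      rcases eq_or_ne (fconj f y) ⊤ with hc | hc
      · rw [hc, EReal.sub_top] at heq; exact absurd heq (by simp)
      · rw [(EReal.coe_toReal hc (aux_fconj_ne_bot hf y)).symm, ← EReal.coe_sub] at heq
        exact EReal.coe_ne_top _ heq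
    exact ⟨aux_mem_subdiff_of_attain hf hxt heq, hyA⟩

end Aux3
section Aux4

variable {d : ℕ}

lemma aux_slope_tendsto {F : Euc d → ℝ} {z : Euc d} (hF : DifferentiableAt ℝ F z)
    (u : Euc d) :
    Tendsto (fun t : ℝ => (F (z + t • u) - F z) / t) (𝓝[>] (0 : ℝ))
      (𝓝 ⟪u, gradient F z⟫) := by
  have hfd : HasFDerivAt F ((InnerProductSpace.toDual ℝ (Euc d)) (gradient F z)) z :=
    hF.hasGradientAt.hasFDerivAt
  have hline : HasDerivAt (fun t : ℝ => z + t • u) u 0 := by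
    simpa using ((hasDerivAt_id (0 : ℝ)).smul_const u).const_add z
  have hcomp : HasDerivAt (fun t : ℝ => F (z + t • u)) ⟪u, gradient F z⟫ 0 := by
    have hfd' : HasFDerivAt F ((InnerProductSpace.toDual ℝ (Euc d)) (gradient F z))
        (z + (0:ℝ) • u) := by simpa using hfd
    have h2 := hfd'.comp_hasDerivAt 0 hline
    have h4 : HasDerivAt (fun t : ℝ => F (z + t • u))
        ((InnerProductSpace.toDual ℝ (Euc d)) (gradient F z) u) 0 := h2
    rwa [InnerProductSpace.toDual_apply_apply, real_inner_comm] at h4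
  have hslope := hasDerivAt_iff_tendsto_slope.1 hcomp
  have h3 := hslope.mono_left
    (nhdsWithin_mono 0 fun t (ht : t ∈ Set.Ioi (0:ℝ)) => (ne_of_gt ht : t ≠ 0))
  refine h3.congr' ?_
  filter_upwards [self_mem_nhdsWithin] with t ht
  rw [slope_def_field]
  simp

lemma aux_slope_le {F : Euc d → ℝ} {z : Euc d} (hF : DifferentiableAt ℝ F z)
    {u : Euc d} {b : ℝ} (hb : ∀ᶠ t in 𝓝[>] (0:ℝ), F (z + t • u) - F z ≤ t * b) :
    ⟪u, gradient F z⟫ ≤ b := by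
  refine le_of_tendsto (aux_slope_tendsto hF u) ?_
  filter_upwards [hb, self_mem_nhdsWithin] with t h1 (ht : (0:ℝ) < t)
  rw [div_le_iff₀ ht]
  linarith [h1]

lemma aux_slope_ge {F : Euc d → ℝ} {z : Euc d} (hF : DifferentiableAt ℝ F z)
    {u : Euc d} {b : ℝ} (hb : ∀ᶠ t in 𝓝[>] (0:ℝ), t * b ≤ F (z + t • u) - F z) :
    b ≤ ⟪u, gradient F z⟫ := by
  refine ge_of_tendsto (aux_slope_tendsto hF u) ?_
  filter_upwards [hb, self_mem_nhdsWithin] with t h1 (ht : (0:ℝ) < t)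
  rw [le_div_iff₀ ht]
  linarith [h1]

variable {f : Euc d → EReal}

lemma aux_grad_subgrad (hf : ClosedConvexFun f) {z : Euc d} (hz : z ∈ domGrad f) :
    gradient (toRealFun f) z ∈ subdiff f z := by
  obtain ⟨hzD, hdiff⟩ := hz
  have hzt : f z ≠ ⊤ := interior_subset hzD
  refine aux_subdiff_of_real hf hzt fun w hw => ?_
  suffices h : ⟪w - z, gradient (toRealFun f) z⟫ ≤ toRealFun f w - toRealFun f z by linarith
  refine aux_slope_le hdiff ?_
  have hIoo : Set.Ioo (0:ℝ) 1 ∈ 𝓝[>] (0:ℝ) :=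
    Ioo_mem_nhdsGT_of_mem ⟨le_refl 0, zero_lt_one⟩
  filter_upwards [hIoo] with t ht
  obtain ⟨ht0, ht1⟩ := ht
  have hpt : (1 - t) • z + t • w = z + t • (w - z) := by
    rw [sub_smul, one_smul, smul_sub]; abel
  have hconv := (aux_convexOn_F hf).2 hzt hw (by linarith : (0:ℝ) ≤ 1 - t) ht0.le
    (by ring : (1 - t) + t = 1)
  rw [hpt] at hconv
  simp only [smul_eq_mul] at hconv
  nlinarith [hconv]

lemma aux_subgrad_unique (hf : ClosedConvexFun f) {z y : Euc d} (hz : z ∈ domGrad f)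
    (hy : y ∈ subdiff f z) : y = gradient (toRealFun f) z := by
  obtain ⟨hzD, hdiff⟩ := hz
  set v := gradient (toRealFun f) z with hv
  set u := y - v with hu
  have hreal := aux_subdiff_real hf hy
  have h1 : ⟪u, y⟫ ≤ ⟪u, v⟫ := by
    refine aux_slope_ge hdiff ?_
    have hmem : ∀ᶠ t in 𝓝 (0:ℝ), z + t • u ∈ interior (effDom f) := by
      have hcont : ContinuousAt (fun t : ℝ => z + t • u) 0 := by fun_prop
      have hnh : interior (effDom f) ∈ 𝓝 ((fun t : ℝ => z + t • u) 0) := by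
        simpa using isOpen_interior.mem_nhds hzD
      exact hcont.eventually_mem hnh
    filter_upwards [nhdsWithin_le_nhds hmem] with t hmem'
    have hwne : f (z + t • u) ≠ ⊤ := interior_subset hmem'
    have h2 := hreal (z + t • u) hwne
    rw [add_sub_cancel_left, real_inner_smul_left] at h2
    linarith
  have h2 : (0:ℝ) ≤ ‖u‖ ^ 2 := sq_nonneg _
  have h3 : ⟪u, u⟫ ≤ 0 := by
    have := inner_sub_right (𝕜 := ℝ) u y v
    rw [← hu] at this
    linarith [this]
  have h4 : u = 0 := by
    have := real_inner_self_nonpos.1 h3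
    exact this
  have := sub_eq_zero.1 (hu ▸ h4)
  exact this

end Aux4
section Aux5

variable {d : ℕ} {f : Euc d → EReal}

lemma aux_subdiff_limit (hf : ClosedConvexFun f) {x v : Euc d} {xs vs : ℕ → Euc d}
    (hsub : ∀ n, vs n ∈ subdiff f (xs n)) (hx : Tendsto xs atTop (𝓝 x))
    (hv : Tendsto vs atTop (𝓝 v)) : v ∈ subdiff f x := by
  obtain ⟨w₀, hw₀⟩ := hf.2.2.1
  have hxt : ∀ n, f (xs n) ≠ ⊤ := fun n => aux_fx_ne_top_of_subdiff hf ⟨_, hsub n⟩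
  have hreal : ∀ n, ∀ w, f w ≠ ⊤ →
      toRealFun f (xs n) + ⟪w - xs n, vs n⟫ ≤ toRealFun f w :=
    fun n => aux_subdiff_real hf (hsub n)
  have hinner : ∀ w : Euc d, Tendsto (fun n => ⟪w - xs n, vs n⟫) atTop (𝓝 ⟪w - x, v⟫) :=
    fun w => Tendsto.inner (tendsto_const_nhds.sub hx) hv
  have hfx : f x ≠ ⊤ := by
    intro ht
    set C : ℝ := toRealFun f w₀ - ⟪w₀ - x, v⟫ + 1 with hC
    have hev1 : ∀ᶠ n in atTop, toRealFun f (xs n) ≤ C := by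
      filter_upwards [(hinner w₀).eventually
        (eventually_gt_nhds (show ⟪w₀ - x, v⟫ - 1 < ⟪w₀ - x, v⟫ by linarith))] with n h1
      have h2 := hreal n w₀ hw₀
      rw [hC]; linarith
    have h2 : ∀ᶠ x' in 𝓝 x, ((C : ℝ) : EReal) < f x' :=
      hf.1 x _ (show ((C : ℝ) : EReal) < f x by rw [ht]; exact EReal.coe_lt_top C)
    obtain ⟨n, h4, h5⟩ := ((hx.eventually h2).and hev1).exists
    rw [aux_coe hf (hxt n), EReal.coe_lt_coe_iff] at h4
    linarith
  refine aux_subdiff_of_real hf hfx fun w hw => ?_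
  refine le_of_forall_pos_le_add fun ε hε => ?_
  have hev2 : ∀ᶠ n in atTop, ⟪w - x, v⟫ - ε / 2 < ⟪w - xs n, vs n⟫ :=
    (hinner w).eventually (eventually_gt_nhds (by linarith))
  have hev3 : ∀ᶠ x' in 𝓝 x, ((toRealFun f x - ε / 2 : ℝ) : EReal) < f x' := by
    refine hf.1 x _ ?_
    show _ < f x
    rw [aux_coe hf hfx, EReal.coe_lt_coe_iff]
    linarith
  obtain ⟨n, h4, h5⟩ := ((hx.eventually hev3).and hev2).exists
  have h6 := hreal n w hw
  rw [aux_coe hf (hxt n), EReal.coe_lt_coe_iff] at h4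
  linarith

end Aux5
section Aux6

open Metric MeasureTheory

variable {d : ℕ} {f : Euc d → EReal}

lemma aux_ball_bound (hf : ClosedConvexFun f) {x₀ : Euc d}
    (hx₀ : x₀ ∈ interior (effDom f)) :
    ∃ ρ M, 0 < ρ ∧ closedBall x₀ ρ ⊆ interior (effDom f) ∧
      ∀ w ∈ closedBall x₀ ρ, toRealFun f w ≤ M := by
  obtain ⟨ε, hε, hball⟩ := Metric.isOpen_iff.1 isOpen_interior x₀ hx₀
  have hsub : closedBall x₀ (ε / 2) ⊆ interior (effDom f) :=
    (closedBall_subset_ball (by linarith)).trans hball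
  have hconv : ConvexOn ℝ (interior (effDom f)) (toRealFun f) :=
    (aux_convexOn_F hf).subset interior_subset (aux_convex_effDom hf).interior
  have hcont : ContinuousOn (toRealFun f) (interior (effDom f)) :=
    hconv.continuousOn isOpen_interior
  obtain ⟨w₀, hw₀, hmax⟩ := (isCompact_closedBall x₀ (ε / 2)).exists_isMaxOn
    ⟨x₀, mem_closedBall_self (by positivity)⟩ (hcont.mono hsub)
  exact ⟨ε / 2, toRealFun f w₀, by positivity, hsub, fun w hw => hmax hw⟩

lemma aux_exists_diff_point {F : Euc d → ℝ} {c : Euc d} {r : ℝ} (hr : 0 < r) {K : NNReal}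
    (hlip : LipschitzOnWith K F (ball c r)) :
    ∃ z ∈ ball c r, DifferentiableAt ℝ F z := by
  have hae := hlip.ae_differentiableWithinAt_of_mem (μ := (volume : Measure (Euc d)))
  by_contra hcon
  push_neg at hcon
  have h2 : ∀ᵐ z ∂(volume : Measure (Euc d)), z ∉ ball c r := by
    filter_upwards [hae] with z hz
    intro hmem
    exact hcon z hmem ((hz hmem).differentiableAt (Metric.isOpen_ball.mem_nhds hmem))
  have h3 : volume (ball c r) = 0 := by
    have := h2
    rw [MeasureTheory.ae_iff] at this
    simp at this
    exact this
  exact absurd h3 (measure_ball_pos volume c hr).ne'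

end Aux6
section Aux7

open Metric

variable {d : ℕ} {f : Euc d → EReal}

set_option maxHeartbeats 1000000 in
lemma aux_seq_to_grad (hf : ClosedConvexFun f) (hD : (interior (effDom f)).Nonempty)
    {x v : Euc d} (hv : v ∈ subdiff f x) :
    ∃ (zs : ℕ → Euc d) (w : Euc d), (∀ n, zs n ∈ domGrad f) ∧
      Tendsto zs atTop (𝓝 x) ∧
      Tendsto (fun n => gradient (toRealFun f) (zs n)) atTop (𝓝 w) := by
  classical
  have hxt : f x ≠ ⊤ := aux_fx_ne_top_of_subdiff hf ⟨v, hv⟩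
  obtain ⟨x₀, hx₀⟩ := hD
  obtain ⟨ρ, M, hρ, hball, hbound⟩ := aux_ball_bound hf hx₀
  have hreal := aux_subdiff_real hf hv
  set F := toRealFun f with hF
  set R : ℝ := ‖x₀ - x‖ + ρ with hR
  have hR0 : 0 < R := by positivity
  set C₀ : ℝ := (M - F x) + R * ‖v‖ with hC₀
  set C₂ : ℝ := max (2 * C₀ / ρ) 0 with hC₂
  -- key properties of points in the scaled balls
  have key : ∀ t : ℝ, 0 < t → t ≤ 1 → ∀ w ∈ ball (x + t • (x₀ - x)) (t * ρ),
      w ∈ interior (effDom f) ∧ F w - F x ≤ t * (M - F x) ∧ ‖w - x‖ ≤ t * R := by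
    intro t ht0 ht1 w hw
    set c : Euc d := x + t • (x₀ - x) with hc
    have hwc : ‖w - c‖ < t * ρ := mem_ball_iff_norm.1 hw
    set p : Euc d := x₀ + t⁻¹ • (w - c) with hp
    have hpball : p ∈ ball x₀ ρ := by
      rw [mem_ball_iff_norm, hp, add_sub_cancel_left, norm_smul, norm_inv,
        Real.norm_eq_abs, abs_of_pos ht0]
      rw [inv_mul_lt_iff₀ ht0]
      linarith
    have hpD : p ∈ interior (effDom f) := hball (ball_subset_closedBall hpball)
    have hweq : w = x + t • (p - x) := by
      rw [hp, hc]
      match_scalars <;> field_simp <;> ring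
    have hiD : w ∈ interior (effDom f) := by
      rw [hweq]
      refine (aux_convex_effDom hf).add_smul_mem_interior' (subset_closure hxt) ?_ ⟨ht0, ht1⟩
      rwa [add_sub_cancel]
    refine ⟨hiD, ?_, ?_⟩
    · have hweq2 : w = (1 - t) • x + t • p := by
        rw [hweq, sub_smul, one_smul, smul_sub]; abel
      have hconv := (aux_convexOn_F hf).2 hxt (interior_subset hpD)
        (by linarith : (0:ℝ) ≤ 1 - t) ht0.le (by ring : (1 - t) + t = 1)
      rw [← hweq2] at hconv
      simp only [smul_eq_mul] at hconv
      have hpM : F p ≤ M := hbound p (ball_subset_closedBall hpball)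
      nlinarith
    · have : w - x = t • (x₀ - x) + (w - c) := by rw [hc]; abel
      rw [this] at *
      calc ‖t • (x₀ - x) + (w - c)‖ ≤ ‖t • (x₀ - x)‖ + ‖w - c‖ := norm_add_le _ _
        _ ≤ t * ‖x₀ - x‖ + t * ρ := by
            rw [norm_smul, Real.norm_eq_abs, abs_of_pos ht0]; linarith
        _ = t * R := by rw [hR]; ring
  -- lower bound on F on those balls
  have keylow : ∀ t : ℝ, 0 < t → t ≤ 1 → ∀ w ∈ ball (x + t • (x₀ - x)) (t * ρ),
      F x - R * ‖v‖ ≤ F w := by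
    intro t ht0 ht1 w hw
    obtain ⟨hiD, _, hwx⟩ := key t ht0 ht1 w hw
    have h1 := hreal w (show f w ≠ ⊤ from interior_subset hiD)
    have h2 : |⟪w - x, v⟫| ≤ ‖w - x‖ * ‖v‖ := abs_real_inner_le_norm _ _
    have h3 : ‖w - x‖ * ‖v‖ ≤ R * ‖v‖ := by
      refine mul_le_mul_of_nonneg_right ?_ (norm_nonneg v)
      calc ‖w - x‖ ≤ t * R := hwx
        _ ≤ 1 * R := by nlinarith
        _ = R := one_mul R
    have h4 := abs_le.1 h2
    linarith [h1, h4.1]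
  -- the per-n construction
  have hstep : ∀ n : ℕ, ∃ z, z ∈ domGrad f ∧ ‖z - x‖ ≤ (1 / (n + 1) : ℝ) * R ∧
      ‖gradient F z - v‖ ≤ C₂ := by
    intro n
    set t : ℝ := 1 / (n + 1) with htdef
    have ht0 : 0 < t := by positivity
    have ht1 : t ≤ 1 := by
      rw [htdef, div_le_one (by positivity)]
      linarith [Nat.cast_nonneg (α := ℝ) n]
    set c : Euc d := x + t • (x₀ - x) with hc
    -- |F| bound on the ball
    set B₀ : ℝ := max (max (F x) M) (-(F x - R * ‖v‖)) with hB₀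
    have habs : ∀ a, dist a c < t * ρ → |F a| ≤ B₀ := by
      intro a ha
      have ha' : a ∈ ball c (t * ρ) := mem_ball.2 ha
      obtain ⟨_, hup, _⟩ := key t ht0 ht1 a ha'
      have hlow := keylow t ht0 ht1 a ha'
      rw [abs_le]
      constructor
      · have : -(F x - R * ‖v‖) ≤ B₀ := le_max_right _ _
        linarith
      · have hup2 : F a ≤ max (F x) M := by
          rcases le_total (F x) M with h | h
          · nlinarith [le_max_right (F x) M]
          · nlinarith [le_max_left (F x) M]
        exact hup2.trans (le_max_left _ _)
    have hconvB : ConvexOn ℝ (ball c (t * ρ)) F :=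
      (aux_convexOn_F hf).subset
        (fun w hw => interior_subset (key t ht0 ht1 w hw).1) (convex_ball c (t * ρ))
    have hlip0 := hconvB.lipschitzOnWith_of_abs_le
      (by positivity : (0:ℝ) < t * ρ / 2) habs
    have hlip : LipschitzOnWith (2 * B₀ / (t * ρ / 2)).toNNReal F (ball c (t * ρ / 2)) :=
      hlip0.mono (ball_subset_ball (by ring_nf; linarith))
    obtain ⟨z, hzball, hzdiff⟩ := aux_exists_diff_point (by positivity : (0:ℝ) < t * ρ / 2) hlip
    have hzball' : z ∈ ball c (t * ρ) := ball_subset_ball (by nlinarith) hzball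
    obtain ⟨hzD, _, hzx⟩ := key t ht0 ht1 z hzball'
    have hzdom : z ∈ domGrad f := ⟨hzD, hzdiff⟩
    refine ⟨z, hzdom, hzx, ?_⟩
    -- gradient bound
    set g : Euc d := gradient F z with hg
    rcases eq_or_ne g v with hgv | hgv
    · rw [hgv, sub_self, norm_zero, hC₂]; exact le_max_right _ _
    have hgs := aux_subdiff_real hf (aux_grad_subgrad hf hzdom)
    set u : Euc d := ‖g - v‖⁻¹ • (g - v) with hu
    have hnu : ‖u‖ = 1 := by
      rw [hu, norm_smul, norm_inv, norm_norm, inv_mul_cancel₀]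
      exact norm_ne_zero_iff.2 (sub_ne_zero.2 hgv)
    set w' : Euc d := z + (t * ρ / 2) • u with hw'
    have hw'ball : w' ∈ ball c (t * ρ) := by
      rw [mem_ball_iff_norm]
      have h1 : ‖z - c‖ < t * ρ / 2 := mem_ball_iff_norm.1 hzball
      have : w' - c = (z - c) + (t * ρ / 2) • u := by rw [hw']; abel
      rw [this]
      calc ‖(z - c) + (t * ρ / 2) • u‖ ≤ ‖z - c‖ + ‖(t * ρ / 2) • u‖ := norm_add_le _ _
        _ = ‖z - c‖ + t * ρ / 2 := by
            rw [norm_smul, Real.norm_eq_abs, abs_of_pos (by positivity), hnu, mul_one]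
        _ < t * ρ := by linarith
    obtain ⟨hw'D, hw'up, hw'x⟩ := key t ht0 ht1 w' hw'ball
    have hw'top : f w' ≠ ⊤ := interior_subset hw'D
    have h5 := hgs w' hw'top
    have h6 := hreal z (show f z ≠ ⊤ from interior_subset hzD)
    -- inner products
    have hinner1 : ⟪w' - z, g⟫ ≤ F w' - F z := by linarith
    have hinner2 : F x + ⟪z - x, v⟫ ≤ F z := h6
    have hsplit : ⟪w' - x, v⟫ = ⟪w' - z, v⟫ + ⟪z - x, v⟫ := by
      rw [← inner_add_left]
      congr 1
      abel
    have hbnd : ⟪w' - z, g - v⟫ ≤ t * C₀ := by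
      have e1 : ⟪w' - z, g - v⟫ = ⟪w' - z, g⟫ - ⟪w' - z, v⟫ := by rw [inner_sub_right]
      have e2 : |⟪w' - x, v⟫| ≤ ‖w' - x‖ * ‖v‖ := abs_real_inner_le_norm _ _
      have e3 : ‖w' - x‖ * ‖v‖ ≤ t * R * ‖v‖ :=
        mul_le_mul_of_nonneg_right hw'x (norm_nonneg v)
      have e4 := abs_le.1 e2
      rw [e1, hC₀]
      linarith [hinner1, hinner2, hsplit, e3, e4.1, hw'up]
    have hlhs : ⟪w' - z, g - v⟫ = (t * ρ / 2) * ‖g - v‖ := by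
      have : w' - z = (t * ρ / 2) • u := by rw [hw']; abel
      have hgv0 : ‖g - v‖ ≠ 0 := norm_ne_zero_iff.2 (sub_ne_zero.2 hgv)
      rw [this, hu, real_inner_smul_left, real_inner_smul_left,
        real_inner_self_eq_norm_sq]
      field_simp [hgv0]
    have hfin : ‖g - v‖ ≤ 2 * C₀ / ρ := by
      rw [hlhs] at hbnd
      rw [le_div_iff₀ hρ]
      nlinarith [hbnd, ht0]
    exact hfin.trans (le_max_left _ _)
  choose zs hz1 hz2 hz3 using hstep
  have hxs : Tendsto zs atTop (𝓝 x) := by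
    rw [tendsto_iff_dist_tendsto_zero]
    refine squeeze_zero (g := fun n : ℕ => (1 / (n + 1) : ℝ) * R) (fun n => dist_nonneg) (fun n => ?_) ?_
    · rw [dist_eq_norm]; exact hz2 n
    · have h0 : Tendsto (fun n : ℕ => (1 / (n + 1) : ℝ)) atTop (𝓝 0) :=
        tendsto_one_div_add_atTop_nhds_zero_nat
      simpa using h0.mul_const R
  have hC₂0 : 0 ≤ C₂ := le_max_right _ _
  have hmem : ∀ n, gradient F (zs n) ∈ closedBall v C₂ := fun n => by
    rw [mem_closedBall, dist_eq_norm]; exact hz3 n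
  obtain ⟨w, hwmem, φ, hφ, hwt⟩ := (isCompact_closedBall v C₂).tendsto_subseq hmem
  exact ⟨zs ∘ φ, w, fun n => hz1 (φ n), hxs.comp hφ.tendsto_atTop, hwt⟩

end Aux7
section Aux8

open Metric

variable {d : ℕ} {f : Euc d → EReal}

lemma aux_fconj_lsc (hf : ClosedConvexFun f) : LowerSemicontinuous (fconj f) := by
  refine lowerSemicontinuous_iSup fun x => ?_
  rcases eq_or_ne (f x) ⊤ with hx | hx
  · have : (fun y : Euc d => ((⟪x, y⟫ : ℝ) : EReal) - f x) = fun _ => (⊥ : EReal) := by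
      funext y; rw [hx, EReal.sub_top]
    rw [this]
    exact lowerSemicontinuous_const
  · have : (fun y : Euc d => ((⟪x, y⟫ : ℝ) : EReal) - f x) =
        fun y => ((⟪x, y⟫ - toRealFun f x : ℝ) : EReal) := by
      funext y; rw [aux_coe hf hx, ← EReal.coe_sub]
    rw [this]
    exact (continuous_coe_real_ereal.comp
      ((continuous_const.inner continuous_id).sub continuous_const)).lowerSemicontinuous

set_option maxHeartbeats 1000000 in
lemma aux_grad_mem_A (hf : ClosedConvexFun f) {A : Set (Euc d)} (hA : IsClosed A)
    (hfA : ∀ x ∈ closure (interior (effDom f)), restrSup f A x = f x)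
    {z : Euc d} (hz : z ∈ domGrad f) : gradient (toRealFun f) z ∈ A := by
  classical
  obtain ⟨hzD, hzdiff⟩ := hz
  have hzt : f z ≠ ⊤ := interior_subset hzD
  have hzcl : z ∈ closure (interior (effDom f)) := subset_closure hzD
  set F := toRealFun f with hF
  set c : ℝ := F z with hc
  have hsup : restrSup f A z = ((c : ℝ) : EReal) := by
    rw [hfA z hzcl, aux_coe hf hzt]
  obtain ⟨ρ, M, hρ, hball, hbound⟩ := aux_ball_bound hf hzD
  have hMc : c ≤ M := hbound z (mem_closedBall_self hρ.le)
  -- maximizing sequence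
  have hseq : ∀ n : ℕ, ∃ y, y ∈ A ∧
      ((c - 1 / (n + 1) : ℝ) : EReal) < ((⟪z, y⟫ : ℝ) : EReal) - fconj f y := by
    intro n
    have hlt : ((c - 1 / (n + 1) : ℝ) : EReal) < restrSup f A z := by
      rw [hsup, EReal.coe_lt_coe_iff]
      have : (0:ℝ) < 1 / (n + 1) := by positivity
      linarith
    rw [restrSup, lt_iSup_iff] at hlt
    obtain ⟨y, hy⟩ := hlt
    rw [lt_iSup_iff] at hy
    obtain ⟨hyA, hy⟩ := hy
    exact ⟨y, hyA, hy⟩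
  choose ys hysA hysv using hseq
  -- facts about fconj along the sequence
  have hfc : ∀ n : ℕ, fconj f (ys n) ≠ ⊤ := by
    intro n ht
    have := hysv n
    rw [ht, EReal.sub_top] at this
    exact absurd this (by simp)
  set q : ℕ → ℝ := fun n => (fconj f (ys n)).toReal with hq
  have hqc : ∀ n, fconj f (ys n) = ((q n : ℝ) : EReal) :=
    fun n => (EReal.coe_toReal (hfc n) (aux_fconj_ne_bot hf (ys n))).symm
  have hysv' : ∀ n : ℕ, c - 1 / (n + 1) < ⟪z, ys n⟫ - q n := by
    intro n
    have := hysv n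
    rw [hqc n, ← EReal.coe_sub, EReal.coe_lt_coe_iff] at this
    exact this
  have heps : ∀ n : ℕ, (0:ℝ) < 1 / (n + 1) ∧ (1 / (n + 1) : ℝ) ≤ 1 := by
    intro n
    constructor
    · positivity
    · rw [div_le_one (by positivity)]; linarith [Nat.cast_nonneg (α := ℝ) n]
  -- norm bound
  set R : ℝ := (M - c + 1) / ρ with hRdef
  have hRbd : ∀ n, ‖ys n‖ ≤ R := by
    intro n
    rcases eq_or_ne (ys n) 0 with h0 | h0
    · rw [h0, norm_zero, hRdef]
      exact div_nonneg (by linarith) hρ.le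
    · set y := ys n with hy
      have hny : (0:ℝ) < ‖y‖ := norm_pos_iff.2 h0
      have hny' : ‖y‖ ≠ 0 := hny.ne'
      set w : Euc d := z + (ρ * ‖y‖⁻¹) • y with hw
      have hwb : w ∈ closedBall z ρ := by
        rw [mem_closedBall, dist_eq_norm, hw, add_sub_cancel_left, norm_smul,
          Real.norm_eq_abs, abs_of_pos (mul_pos hρ (inv_pos.2 hny))]
        rw [mul_assoc, inv_mul_cancel₀ (norm_ne_zero_iff.2 h0), mul_one]
      have hwt : f w ≠ ⊤ := interior_subset (hball hwb)
      have hlb := aux_fconj_lb f w y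
      rw [aux_coe hf hwt, ← EReal.coe_sub, hqc n, EReal.coe_le_coe_iff] at hlb
      have hFwM : F w ≤ M := hbound w hwb
      have hinner : ⟪w, y⟫ = ⟪z, y⟫ + ρ * ‖y‖ := by
        rw [hw, inner_add_left, real_inner_smul_left, real_inner_self_eq_norm_sq]
        have he : ρ * ‖y‖⁻¹ * ‖y‖ ^ 2 = ρ * ‖y‖ := by
          rw [sq]
          field_simp
        rw [he]
      have h1 := hysv' n
      have h2 := (heps n).2
      rw [hinner] at hlb
      have hkey : ρ * ‖y‖ ≤ M - c + 1 := by linarith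
      rw [hRdef, le_div_iff₀ hρ]
      nlinarith [hkey]
  -- compact subsequence
  have hmem : ∀ n, ys n ∈ closedBall (0 : Euc d) R := fun n => by
    rw [mem_closedBall, dist_eq_norm, sub_zero]; exact hRbd n
  obtain ⟨ystar, _, φ, hφ, htend⟩ := (isCompact_closedBall (0 : Euc d) R).tendsto_subseq hmem
  have hystarA : ystar ∈ A :=
    hA.mem_of_tendsto htend (Filter.Eventually.of_forall fun n => hysA (φ n))
  -- fconj at the limit
  have hclaim : fconj f ystar ≤ ((⟪z, ystar⟫ - c : ℝ) : EReal) := by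
    by_contra hlt
    push_neg at hlt
    obtain ⟨b, hb1, hb2⟩ := EReal.exists_between_coe_real hlt
    have hev := (aux_fconj_lsc hf ystar (b : EReal) hb2)
    have hev2 := htend.eventually hev
    have hinner_t : Tendsto (fun n => ⟪z, ys (φ n)⟫ - c + 1 / (φ n + 1)) atTop
        (𝓝 (⟪z, ystar⟫ - c)) := by
      have h1 : Tendsto (fun n => ⟪z, ys (φ n)⟫) atTop (𝓝 ⟪z, ystar⟫) :=
        Tendsto.inner tendsto_const_nhds htend
      have h2 : Tendsto (fun n : ℕ => (1 / ((φ n : ℝ) + 1))) atTop (𝓝 0) :=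
        tendsto_one_div_add_atTop_nhds_zero_nat.comp hφ.tendsto_atTop
      simpa using (h1.sub_const c).add h2
    have hble : b ≤ ⟪z, ystar⟫ - c := by
      refine ge_of_tendsto hinner_t ?_
      filter_upwards [hev2] with n h3
      have h3' : (b : EReal) < fconj f (ys (φ n)) := h3
      have h4 : b < q (φ n) := by
        rw [hqc (φ n), EReal.coe_lt_coe_iff] at h3'
        exact h3'
      have h5 := hysv' (φ n)
      linarith
    rw [EReal.coe_lt_coe_iff] at hb1
    linarith
  -- value at ystar equals f z
  have hfct : fconj f ystar ≠ ⊤ :=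
    fun ht => EReal.coe_ne_top _ (top_le_iff.1 (ht ▸ hclaim))
  set qs : ℝ := (fconj f ystar).toReal with hqs
  have hqsc : fconj f ystar = ((qs : ℝ) : EReal) :=
    (EReal.coe_toReal hfct (aux_fconj_ne_bot hf ystar)).symm
  have hqsle : qs ≤ ⟪z, ystar⟫ - c := by
    rw [hqsc, EReal.coe_le_coe_iff] at hclaim
    exact hclaim
  have hge : ((c : ℝ) : EReal) ≤ ((⟪z, ystar⟫ : ℝ) : EReal) - fconj f ystar := by
    rw [hqsc, ← EReal.coe_sub, EReal.coe_le_coe_iff]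
    linarith
  have hle : ((⟪z, ystar⟫ : ℝ) : EReal) - fconj f ystar ≤ ((c : ℝ) : EReal) := by
    rw [← hsup]
    exact aux_value_le_restrSup f A hystarA z
  have heq : ((⟪z, ystar⟫ : ℝ) : EReal) - fconj f ystar = f z := by
    rw [le_antisymm hle hge, aux_coe hf hzt]
  have hsubm : ystar ∈ subdiff f z := aux_mem_subdiff_of_attain hf hzt heq
  have := aux_subgrad_unique hf ⟨hzD, hzdiff⟩ hsubm
  rwa [← this]

end Aux8
/-- Lemma 5 of the paper, first part. -/
theorem stmt7 {d : ℕ} (f : Euc d → EReal) (hf : ClosedConvexFun f)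
    (hD : (interior (effDom f)).Nonempty)
    (A : Set (Euc d)) (hA : IsClosed A)
    (hfA : ∀ x ∈ closure (interior (effDom f)), restrSup f A x = f x) :
    (∀ x ∈ closure (interior (effDom f)), subdiff f x ∩ A = argMaxOn f A x) ∧
    {x | (argMaxOn f A x).Nonempty} ∩ closure (interior (effDom f)) =
      {x | (subdiff f x).Nonempty} ∧
    {x | (subdiff f x).Nonempty} = {x | (clarke f x).Nonempty} := by
  refine ⟨fun x hx => conj1 hf A hfA hx, ?_, ?_⟩
  · ext x
    simp only [Set.mem_inter_iff, Set.mem_setOf_eq]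
    constructor
    · rintro ⟨⟨y, hy⟩, hxcl⟩
      have hc := conj1 hf A hfA hxcl
      have : y ∈ subdiff f x ∩ A := hc.symm ▸ hy
      exact ⟨y, this.1⟩
    · rintro ⟨v, hv⟩
      have hxt : f x ≠ ⊤ := aux_fx_ne_top_of_subdiff hf ⟨v, hv⟩
      have hxcl : x ∈ closure (interior (effDom f)) :=
        aux_effDom_subset_closure hf hD hxt
      obtain ⟨zs, w, hz1, hz2, hz3⟩ := aux_seq_to_grad hf hD hv
      have hw : w ∈ subdiff f x :=
        aux_subdiff_limit hf (fun n => aux_grad_subgrad hf (hz1 n)) hz2 hz3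
      have hwA : w ∈ A := hA.mem_of_tendsto hz3
        (Filter.Eventually.of_forall fun n => aux_grad_mem_A hf hA hfA (hz1 n))
      have hc := conj1 hf A hfA hxcl
      refine ⟨⟨w, ?_⟩, hxcl⟩
      rw [← hc]
      exact ⟨hw, hwA⟩
  · ext x
    simp only [Set.mem_setOf_eq]
    constructor
    · rintro ⟨v, hv⟩
      obtain ⟨zs, w, hz1, hz2, hz3⟩ := aux_seq_to_grad hf hD hv
      exact ⟨w, subset_closure (subset_convexHull ℝ _ ⟨zs, hz1, hz2, hz3⟩)⟩
    · rintro ⟨v, hv⟩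
      have hbase : {u : Euc d | ∃ xs : ℕ → Euc d, (∀ n, xs n ∈ domGrad f) ∧
          Tendsto xs atTop (𝓝 x) ∧
          Tendsto (fun n => gradient (toRealFun f) (xs n)) atTop (𝓝 u)}.Nonempty := by
        by_contra h
        rw [Set.not_nonempty_iff_eq_empty] at h
        rw [clarke, h, convexHull_empty, closure_empty] at hv
        exact hv
      obtain ⟨w, xs, h1, h2, h3⟩ := hbase
      exact ⟨w, aux_subdiff_limit hf (fun n => aux_grad_subgrad hf (h1 n)) h2 h3⟩

end
end
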